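/- arXiv:1307.6242 — 7 statements merged into one kernel-verified Lean document; each statement's English description precedes it below -/
import Mathlib

section
/- For any countable field K, there exists a sequence (F_N) of non-empty finite subsets of K such that for every x in K with x ≠ 0, |F_N ∩ (F_N + x)|/|F_N| → 1 and |F_N ∩ (x·F_N)|/|F_N| → 1 as N → ∞ (a double Følner sequence). -/
open Filter Finset
open scoped DirectSum

section Aux

variable {α β : Type*}

lemma folner_transfer [DecidableEq α] [DecidableEq β] {ρ : α → β}
    (hρ : Function.Injective ρ) {f : α → α} {g : β → β}
    (hcomm : ∀ a, ρ (f a) = g (ρ a)) (T : Finset α) :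
    (T ∩ T.image f).card ≤ ((T.image ρ) ∩ (T.image ρ).image g).card := by
  rw [← Finset.card_image_of_injective (T ∩ T.image f) hρ]
  apply Finset.card_le_card
  intro y hy
  obtain ⟨a, ha, rfl⟩ := Finset.mem_image.mp hy
  obtain ⟨ha1, ha2⟩ := Finset.mem_inter.mp ha
  obtain ⟨b, hb, rfl⟩ := Finset.mem_image.mp ha2
  exact Finset.mem_inter.mpr ⟨Finset.mem_image_of_mem _ ha1,
    by rw [hcomm]; exact Finset.mem_image_of_mem _ (Finset.mem_image_of_mem _ hb)⟩

lemma box_folner {n : ℕ} {D : Type*} [AddCommGroup D] [Fintype D] [DecidableEq D]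
    (S : Finset ((Fin n → ℤ) × D)) {ε : ℝ} (hε : 0 < ε) (hε1 : ε ≤ 1) :
    ∃ T : Finset ((Fin n → ℤ) × D), T.Nonempty ∧
      ∀ g ∈ S, (1 - ε) * T.card ≤ ((T ∩ T.image (g + ·)).card : ℝ) := by
  classical
  set M : ℕ := S.sup fun g => Finset.univ.sup fun i => (g.1 i).natAbs with hM
  obtain ⟨k, hk⟩ := exists_nat_ge ((n : ℝ) * M / ε)
  have hMabs : ∀ g ∈ S, ∀ i : Fin n, (g.1 i).natAbs ≤ M := by
    intro g hg i
    rw [hM]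
    exact le_trans (Finset.le_sup (f := fun i => (g.1 i).natAbs) (Finset.mem_univ i))
      (Finset.le_sup (f := fun g => Finset.univ.sup fun i => (g.1 i).natAbs) hg)
  refine ⟨(Fintype.piFinset fun _ : Fin n => Finset.Icc (0:ℤ) k) ×ˢ (univ : Finset D), ?_, ?_⟩
  · refine ⟨(fun _ => 0, 0), ?_⟩
    simp [Fintype.mem_piFinset]
  intro g hg
  obtain ⟨v, d⟩ := g
  -- numeric facts
  have hem : (0:ℝ) ≤ 1 - ε / n := by
    rcases Nat.eq_zero_or_pos n with h | h
    · simp [h]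
    · have h1 : (1:ℝ) ≤ n := by exact_mod_cast h
      have : ε / n ≤ ε / 1 := by
        apply div_le_div_of_nonneg_left hε.le one_pos h1
      simp at this
      linarith
  have hMk : ∀ i : Fin n, ((v i).natAbs : ℝ) ≤ ε * (k+1) / n ∧ ((v i).natAbs : ℕ) ≤ k := by
    intro i
    have hn1 : (1:ℝ) ≤ n := by exact_mod_cast i.pos
    have hvM : ((v i).natAbs : ℝ) ≤ M := by exact_mod_cast hMabs _ hg i
    have h2 : (n:ℝ) * M ≤ ε * k := by
      rw [div_le_iff₀ hε] at hk
      linarith [hk]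
    have h3 : (M:ℝ) ≤ ε * k / n := by
      rw [le_div_iff₀ (by linarith : (0:ℝ) < n)]
      linarith [h2]
    constructor
    · have : ε * k / n ≤ ε * (k+1) / n := by
        apply div_le_div_of_nonneg_right ?_ (by linarith)
        · linarith [hε]
      linarith
    · have : (M:ℝ) ≤ k := by
        calc (M:ℝ) ≤ ε * k / n := h3
        _ ≤ 1 * k / 1 := by
            apply div_le_div₀ (by positivity) ?_ one_pos hn1
            apply mul_le_mul hε1 le_rfl (by positivity) one_pos.le
        _ = k := by ring
      exact_mod_cast hvM.trans this
  -- the sub-box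
  set C : Finset (Fin n → ℤ) :=
    Fintype.piFinset fun i => Finset.Icc (max 0 (v i)) (min (k:ℤ) (k + v i)) with hC
  have hsub : C ×ˢ (univ : Finset D) ⊆
      ((Fintype.piFinset fun _ : Fin n => Finset.Icc (0:ℤ) k) ×ˢ (univ : Finset D)) ∩
      (((Fintype.piFinset fun _ : Fin n => Finset.Icc (0:ℤ) k) ×ˢ (univ : Finset D)).image ((v, d) + ·)) := by
    intro y hy
    obtain ⟨w, d'⟩ := y
    rw [Finset.mem_product] at hy
    have hw := hy.1
    rw [hC, Fintype.mem_piFinset] at hw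
    dsimp only at hw
    rw [Finset.mem_inter]
    constructor
    · rw [Finset.mem_product, Fintype.mem_piFinset]
      constructor
      · intro i
        have := hw i
        rw [Finset.mem_Icc] at this ⊢
        dsimp only
        omega
      · exact Finset.mem_univ _
    · rw [Finset.mem_image]
      refine ⟨(w - v, d' - d), ?_, ?_⟩
      · rw [Finset.mem_product, Fintype.mem_piFinset]
        constructor
        · intro i
          have := hw i
          rw [Finset.mem_Icc] at this ⊢
          dsimp only [Pi.sub_apply]
          omega
        · exact Finset.mem_univ _
      · ext <;> simp
  -- cardinality of the sub-box factors
  have hfac : ∀ i : Fin n, ((k:ℝ)+1) * (1 - ε/n) ≤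
      ((Finset.Icc (max 0 (v i)) (min (k:ℤ) (k + v i))).card : ℝ) := by
    intro i
    have hvk := (hMk i).2
    have hcard : ((Finset.Icc (max 0 (v i)) (min (k:ℤ) (k + v i))).card : ℤ)
        = (k:ℤ) + 1 - (v i).natAbs := by
      rw [Int.card_Icc]
      omega
    have : ((Finset.Icc (max 0 (v i)) (min (k:ℤ) (k + v i))).card : ℝ)
        = (k:ℝ) + 1 - (v i).natAbs := by exact_mod_cast hcard
    rw [this]
    have h1 := (hMk i).1
    have hn0 : (0:ℝ) < n := by exact_mod_cast i.pos
    have : ((k:ℝ)+1) * (1 - ε/n) = (k+1) - ε * (k+1) / n := by ring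
    rw [this]
    linarith
  have hIcc : (Finset.Icc (0:ℤ) (k:ℤ)).card = k + 1 := by
    rw [Int.card_Icc]; omega
  have hTcard : (((Fintype.piFinset fun _ : Fin n => Finset.Icc (0:ℤ) k) ×ˢ (univ : Finset D)).card : ℝ)
      = ((k:ℝ)+1)^n * Fintype.card D := by
    rw [Finset.card_product, Fintype.card_piFinset, Finset.card_univ]
    simp only [hIcc, Finset.prod_const, Finset.card_univ, Fintype.card_fin]
    push_cast
    ring
  have hnonneg : (0:ℝ) ≤ ((k:ℝ)+1) * (1 - ε/n) := mul_nonneg (by positivity) hem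
  have h4 : 1 - ε ≤ (1 - ε/(n:ℝ))^n := by
    rcases Nat.eq_zero_or_pos n with h|h
    · subst h; simp; linarith
    · have hn0 : (n:ℝ) ≠ 0 := Nat.cast_ne_zero.mpr h.ne'
      have hc : (n:ℝ) * (ε/n) = ε := by field_simp
      have hb := one_add_mul_le_pow (a := -(ε/(n:ℝ))) (by
        have : 0 ≤ ε / (n:ℝ) := by positivity
        linarith) n
      rw [mul_neg, ← sub_eq_add_neg, hc] at hb
      have h5 : (1 + -(ε/(n:ℝ))) = 1 - ε/(n:ℝ) := by ring
      rw [h5] at hb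
      exact hb
  have hCcard : ((k:ℝ)+1)^n * (1 - ε) ≤ (C.card : ℝ) := by
    have h1 : (C.card : ℝ) = ∏ i : Fin n, ((Finset.Icc (max 0 (v i)) (min (k:ℤ) (k + v i))).card : ℝ) := by
      rw [hC, Fintype.card_piFinset]
      push_cast
      rfl
    have h2 : ∏ _i : Fin n, (((k:ℝ)+1) * (1 - ε/n)) ≤
        ∏ i : Fin n, ((Finset.Icc (max 0 (v i)) (min (k:ℤ) (k + v i))).card : ℝ) :=
      Finset.prod_le_prod (fun i _ => hnonneg) (fun i _ => hfac i)
    rw [Finset.prod_const, Finset.card_univ, Fintype.card_fin] at h2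
    rw [h1]
    refine le_trans ?_ h2
    rw [mul_pow]
    exact mul_le_mul_of_nonneg_left h4 (by positivity)
  have hle : (((C ×ˢ (univ : Finset D)).card) : ℝ) ≤
      ((((Fintype.piFinset fun _ : Fin n => Finset.Icc (0:ℤ) k) ×ˢ (univ : Finset D)) ∩
      (((Fintype.piFinset fun _ : Fin n => Finset.Icc (0:ℤ) k) ×ˢ (univ : Finset D)).image ((v, d) + ·))).card : ℝ) := by
    exact_mod_cast Finset.card_le_card hsub
  refine le_trans ?_ hle
  rw [hTcard, Finset.card_product, Finset.card_univ]
  push_cast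
  have hD : (0:ℝ) ≤ (Fintype.card D : ℝ) := by positivity
  calc (1 - ε) * (((k:ℝ)+1)^n * Fintype.card D)
      = (((k:ℝ)+1)^n * (1 - ε)) * Fintype.card D := by ring
    _ ≤ (C.card : ℝ) * Fintype.card D := mul_le_mul_of_nonneg_right hCcard hD

lemma folner_add {G : Type*} [AddCommGroup G] [DecidableEq G] (S : Finset G) {ε : ℝ}
    (hε : 0 < ε) (hε1 : ε ≤ 1) :
    ∃ T : Finset G, T.Nonempty ∧
      ∀ g ∈ S, (1 - ε) * T.card ≤ ((T ∩ T.image (g + ·)).card : ℝ) := by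
  classical
  set H := AddSubgroup.closure (S : Set G) with hH
  haveI : AddGroup.FG H := AddGroup.closure_finset_fg S
  obtain ⟨n, ι, fι, p, hp, e, ⟨ψ⟩⟩ := AddCommGroup.equiv_free_prod_directSum_zmod H
  haveI := fι
  haveI : DecidableEq ι := Classical.decEq ι
  haveI : ∀ i : ι, NeZero (p i ^ e i) := fun i => ⟨pow_ne_zero _ (hp i).ne_zero⟩
  haveI : Fintype (⨁ i : ι, ZMod (p i ^ e i)) := by
    unfold DirectSum
    infer_instance
  set D := ⨁ i : ι, ZMod (p i ^ e i) with hD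
  let χ : ((Fin n → ℤ) × D) ≃+ H :=
    (AddEquiv.prodCongr Finsupp.addEquivFunOnFinite (AddEquiv.refl D)).symm.trans ψ.symm
  let φ : ((Fin n → ℤ) × D) →+ G := H.subtype.comp χ.toAddMonoidHom
  have hφinj : Function.Injective φ := H.subtype_injective.comp χ.injective
  set S' : Finset ((Fin n → ℤ) × D) :=
    S.attach.image fun x => χ.symm ⟨x.1, AddSubgroup.subset_closure x.2⟩ with hS'
  obtain ⟨T', hT'ne, hT'⟩ := box_folner S' hε hε1
  refine ⟨T'.image φ, hT'ne.image _, ?_⟩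
  intro g hg
  set g' : (Fin n → ℤ) × D := χ.symm ⟨g, AddSubgroup.subset_closure hg⟩ with hg'
  have hg'S : g' ∈ S' := by
    rw [hS']
    exact Finset.mem_image.mpr ⟨⟨g, hg⟩, Finset.mem_attach _ _, rfl⟩
  have hφg : φ g' = g := by
    simp only [hg', φ, AddMonoidHom.comp_apply, AddEquiv.coe_toAddMonoidHom]
    rw [AddEquiv.apply_symm_apply]
    rfl
  have htrans := folner_transfer hφinj (f := (g' + ·)) (g := (g + ·))
    (fun a => by rw [← hφg]; exact map_add φ g' a) T'
  calc (1 - ε) * ((T'.image φ).card : ℝ)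
      = (1 - ε) * (T'.card : ℝ) := by rw [Finset.card_image_of_injective _ hφinj]
    _ ≤ ((T' ∩ T'.image (g' + ·)).card : ℝ) := hT' g' hg'S
    _ ≤ _ := by exact_mod_cast htrans

lemma key_folner {K : Type*} [Field K] [Infinite K] [DecidableEq K] (E : Finset K)
    (hE : ∀ x ∈ E, x ≠ (0:K)) {ε : ℝ} (hε : 0 < ε) (hε1 : ε ≤ 1) :
    ∃ F : Finset K, F.Nonempty ∧ ∀ x ∈ E,
      (1 - ε) * F.card ≤ ((F ∩ F.image (· + x)).card : ℝ) ∧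
      (1 - ε) * F.card ≤ ((F ∩ F.image (x * ·)).card : ℝ) := by
  classical
  -- multiplicative Folner set, living in `Additive Kˣ`
  set S₁ : Finset (Additive Kˣ) :=
    E.attach.image fun x => Additive.ofMul (Units.mk0 x.1 (hE x.1 x.2)) with hS₁
  obtain ⟨T₁, hT₁ne, hT₁⟩ := folner_add S₁ hε hε1
  set ρ : Additive Kˣ → K := fun t => ((Additive.toMul t : Kˣ) : K) with hρdef
  have hρ : Function.Injective ρ := fun a b h => by
    apply Additive.toMul.injective
    exact Units.ext h
  set T : Finset K := T₁.image ρ with hT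
  have hTne : T.Nonempty := hT₁ne.image _
  have hT0 : ∀ t ∈ T, t ≠ (0:K) := by
    intro t ht
    obtain ⟨a, _, rfl⟩ := Finset.mem_image.mp ht
    exact Units.ne_zero _
  have hTcard : (T.card : ℝ) = T₁.card := by
    rw [hT, Finset.card_image_of_injective _ hρ]
  have hTmul : ∀ x ∈ E, (1 - ε) * (T.card : ℝ) ≤ ((T ∩ T.image (x * ·)).card : ℝ) := by
    intro x hx
    set u : Kˣ := Units.mk0 x (hE x hx) with hu
    have huS : Additive.ofMul u ∈ S₁ :=
      Finset.mem_image.mpr ⟨⟨x, hx⟩, Finset.mem_attach _ _, rfl⟩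
    have hcomm : ∀ a : Additive Kˣ, ρ (Additive.ofMul u + a) = x * ρ a := fun a => rfl
    have htrans := folner_transfer hρ (f := (Additive.ofMul u + ·)) (g := (x * ·)) hcomm T₁
    calc (1 - ε) * (T.card : ℝ) = (1 - ε) * (T₁.card : ℝ) := by rw [hTcard]
      _ ≤ ((T₁ ∩ T₁.image (Additive.ofMul u + ·)).card : ℝ) := hT₁ _ huS
      _ ≤ _ := by exact_mod_cast htrans
  -- additive Folner set
  set S₂ : Finset K := (E ×ˢ T).image fun p => p.1 * p.2⁻¹ with hS₂
  obtain ⟨A, hAne, hA⟩ := folner_add S₂ hε hε1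
  -- generic shift c
  set B : Finset K := ((T ×ˢ T) ×ˢ (A ×ˢ A)).image
    (fun q => (q.1.2 * q.2.2 - q.1.1 * q.2.1) / (q.1.1 - q.1.2)) with hB
  obtain ⟨c, hc⟩ := Infinite.exists_notMem_finset B
  have hinj : Set.InjOn (fun p : K × K => p.1 * (p.2 + c)) ↑(T ×ˢ A) := by
    rintro ⟨t, a⟩ hp ⟨t', a'⟩ hq h
    simp only [Finset.coe_product, Set.mem_prod, Finset.mem_coe] at hp hq
    simp only at h
    by_cases htt : t = t'
    · subst htt
      have h1 := mul_left_cancel₀ (hT0 t hp.1) h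
      have h2 : a = a' := add_right_cancel h1
      simp [h2]
    · exfalso
      apply hc
      rw [hB]
      refine Finset.mem_image.mpr ⟨((t, t'), (a, a')), ?_, ?_⟩
      · simp only [Finset.mem_product]
        exact ⟨⟨hp.1, hq.1⟩, hp.2, hq.2⟩
      · have hsub : t - t' ≠ 0 := sub_ne_zero.mpr htt
        show (t' * a' - t * a) / (t - t') = c
        rw [div_eq_iff hsub]
        linear_combination -h
  set F : Finset K := (T ×ˢ A).image (fun p => p.1 * (p.2 + c)) with hF
  have hFcard : (F.card : ℝ) = (T.card : ℝ) * A.card := by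
    rw [hF, Finset.card_image_of_injOn hinj, Finset.card_product]
    push_cast
    ring
  have hFne : F.Nonempty := (hTne.product hAne).image _
  refine ⟨F, hFne, ?_⟩
  intro x hx
  constructor
  · -- additive almost-invariance
    set SgA : Finset K := T.biUnion (fun t =>
      ((A ∩ A.image (fun a => x * t⁻¹ + a)).image fun a => t * (a + c))) with hSgA
    have hdisj : ∀ t ∈ T, ∀ t' ∈ T, t ≠ t' → Disjoint
        ((A ∩ A.image (fun a => x * t⁻¹ + a)).image fun a => t * (a + c))
        ((A ∩ A.image (fun a => x * t'⁻¹ + a)).image fun a => t' * (a + c)) := by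
      intro t ht t' ht' htt
      rw [Finset.disjoint_left]
      intro y hy hy'
      obtain ⟨a, ha, rfl⟩ := Finset.mem_image.mp hy
      obtain ⟨a', ha', he⟩ := Finset.mem_image.mp hy'
      have haA : a ∈ A := (Finset.mem_inter.mp ha).1
      have ha'A : a' ∈ A := (Finset.mem_inter.mp ha').1
      have hmem1 : ((t, a) : K × K) ∈ (↑(T ×ˢ A) : Set (K × K)) := by
        rw [Finset.mem_coe, Finset.mem_product]; exact ⟨ht, haA⟩
      have hmem2 : ((t', a') : K × K) ∈ (↑(T ×ˢ A) : Set (K × K)) := by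
        rw [Finset.mem_coe, Finset.mem_product]; exact ⟨ht', ha'A⟩
      have := hinj hmem2 hmem1 he
      exact htt (congrArg Prod.fst this).symm
    have hcardn : SgA.card = ∑ t ∈ T, (A ∩ A.image (fun a => x * t⁻¹ + a)).card := by
      rw [hSgA, Finset.card_biUnion hdisj]
      refine Finset.sum_congr rfl fun t ht => ?_
      apply Finset.card_image_of_injective
      intro a b hab
      exact add_right_cancel (mul_left_cancel₀ (hT0 t ht) hab)
    have hsum : ∑ _t ∈ T, ((1 - ε) * (A.card : ℝ)) ≤
        ∑ t ∈ T, ((A ∩ A.image (fun a => x * t⁻¹ + a)).card : ℝ) := by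
      apply Finset.sum_le_sum
      intro t ht
      have hmem : x * t⁻¹ ∈ S₂ := by
        rw [hS₂]
        exact Finset.mem_image.mpr ⟨(x, t), Finset.mem_product.mpr ⟨hx, ht⟩, rfl⟩
      exact hA _ hmem
    have hsub2 : SgA ⊆ F ∩ F.image (· + x) := by
      intro y hy
      rw [hSgA, Finset.mem_biUnion] at hy
      obtain ⟨t, ht, hy⟩ := hy
      obtain ⟨a, ha, rfl⟩ := Finset.mem_image.mp hy
      obtain ⟨haA, haim⟩ := Finset.mem_inter.mp ha
      obtain ⟨a₀, ha₀, hae⟩ := Finset.mem_image.mp haim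
      rw [Finset.mem_inter]
      constructor
      · exact Finset.mem_image.mpr ⟨(t, a), Finset.mem_product.mpr ⟨ht, haA⟩, rfl⟩
      · refine Finset.mem_image.mpr ⟨t * (a₀ + c), ?_, ?_⟩
        · exact Finset.mem_image.mpr ⟨(t, a₀), Finset.mem_product.mpr ⟨ht, ha₀⟩, rfl⟩
        · have ht0 := hT0 t ht
          rw [← hae]
          field_simp
          ring
    calc (1 - ε) * (F.card : ℝ) = ∑ _t ∈ T, ((1 - ε) * (A.card : ℝ)) := by
          rw [Finset.sum_const, nsmul_eq_mul, hFcard]; ring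
      _ ≤ ∑ t ∈ T, ((A ∩ A.image (fun a => x * t⁻¹ + a)).card : ℝ) := hsum
      _ = (SgA.card : ℝ) := by rw [hcardn]; push_cast; rfl
      _ ≤ _ := by exact_mod_cast Finset.card_le_card hsub2
  · -- multiplicative almost-invariance
    set SgM : Finset K := ((T ∩ T.image (x * ·)) ×ˢ A).image (fun p : K × K => p.1 * (p.2 + c))
      with hSgM
    have hsubTA : ((T ∩ T.image (x * ·)) ×ˢ A) ⊆ T ×ˢ A :=
      Finset.product_subset_product Finset.inter_subset_left subset_rfl
    have hcardm : SgM.card = (T ∩ T.image (x * ·)).card * A.card := by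
      rw [hSgM, Finset.card_image_of_injOn (hinj.mono (Finset.coe_subset.mpr hsubTA)),
        Finset.card_product]
    have hsubm : SgM ⊆ F ∩ F.image (x * ·) := by
      intro y hy
      rw [hSgM] at hy
      obtain ⟨⟨t, a⟩, hp, rfl⟩ := Finset.mem_image.mp hy
      rw [Finset.mem_product] at hp
      obtain ⟨htm, haA⟩ := hp
      obtain ⟨ht, htim⟩ := Finset.mem_inter.mp htm
      obtain ⟨t₀, ht₀, hte⟩ := Finset.mem_image.mp htim
      rw [Finset.mem_inter]
      refine ⟨Finset.mem_image.mpr ⟨(t, a), Finset.mem_product.mpr ⟨ht, haA⟩, rfl⟩, ?_⟩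
      refine Finset.mem_image.mpr ⟨t₀ * (a + c),
        Finset.mem_image.mpr ⟨(t₀, a), Finset.mem_product.mpr ⟨ht₀, haA⟩, rfl⟩, ?_⟩
      show x * (t₀ * (a + c)) = (t, a).1 * ((t, a).2 + c)
      subst hte
      ring
    calc (1 - ε) * (F.card : ℝ) = ((1 - ε) * T.card) * A.card := by rw [hFcard]; ring
      _ ≤ ((T ∩ T.image (x * ·)).card : ℝ) * A.card :=
          mul_le_mul_of_nonneg_right (hTmul x hx) (by positivity)
      _ = (SgM.card : ℝ) := by rw [hcardm]; push_cast; ring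
      _ ≤ _ := by exact_mod_cast Finset.card_le_card hsubm

end Aux

/-- `F` is a double Følner sequence in the field `K`: a sequence of non-empty finite
subsets that is asymptotically invariant under translation by any `x ∈ K` and under
multiplication by any nonzero `x ∈ K`. -/
def IsDoubleFolner {K : Type*} [Field K] [DecidableEq K] (F : ℕ → Finset K) : Prop :=
  (∀ N, (F N).Nonempty) ∧
  ∀ x : K, x ≠ 0 →
    Tendsto (fun N => ((F N ∩ (F N).image (· + x)).card : ℝ) / (F N).card) atTop (nhds 1) ∧
    Tendsto (fun N => ((F N ∩ (F N).image (x * ·)).card : ℝ) / (F N).card) atTop (nhds 1)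

theorem exists_double_folner (K : Type*) [Field K] [Countable K] [Infinite K]
    [DecidableEq K] :
    ∃ F : ℕ → Finset K, IsDoubleFolner F := by
  classical
  obtain ⟨e⟩ : Nonempty (ℕ ≃ K) := nonempty_equiv_of_countable
  set E : ℕ → Finset K := fun N => ((Finset.range N).image e).erase 0 with hEdef
  have hE : ∀ N, ∀ x ∈ E N, x ≠ (0:K) := fun N x hx => Finset.ne_of_mem_erase hx
  have heps : ∀ N : ℕ, (0:ℝ) < 1/((N:ℝ)+1) ∧ (1:ℝ)/((N:ℝ)+1) ≤ 1 := by
    intro N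
    have h0 : (0:ℝ) < (N:ℝ) + 1 := by positivity
    constructor
    · positivity
    · rw [div_le_one h0]
      linarith [Nat.cast_nonneg (α := ℝ) N]
  choose F hFne hFbound using fun N =>
    key_folner (E N) (hE N) (ε := 1/((N:ℝ)+1)) (heps N).1 (heps N).2
  refine ⟨F, fun N => hFne N, ?_⟩
  intro x hx
  have hmem : ∀ N, e.symm x + 1 ≤ N → x ∈ E N := by
    intro N hN
    refine Finset.mem_erase.mpr ⟨hx, Finset.mem_image.mpr ⟨e.symm x,
      Finset.mem_range.mpr (by omega), e.apply_symm_apply x⟩⟩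
  have hlow : Tendsto (fun N : ℕ => 1 - 1/((N:ℝ)+1)) atTop (nhds 1) := by
    have h0 : Tendsto (fun n : ℕ => 1 / ((n : ℝ) + 1)) atTop (nhds 0) :=
      tendsto_one_div_add_atTop_nhds_zero_nat
    have := (tendsto_const_nhds (α := ℕ) (f := atTop) (x := (1:ℝ))).sub h0
    simpa using this
  have main : ∀ G : ℕ → Finset K, (∀ N, G N ⊆ F N) →
      (∀ N, e.symm x + 1 ≤ N → (1 - 1/((N:ℝ)+1)) * (F N).card ≤ ((G N).card : ℝ)) →
      Tendsto (fun N => ((G N).card : ℝ) / (F N).card) atTop (nhds 1) := by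
    intro G hsub hbd
    have hpos : ∀ N, (0:ℝ) < ((F N).card : ℝ) := by
      intro N
      exact_mod_cast Finset.card_pos.mpr (hFne N)
    apply tendsto_of_tendsto_of_tendsto_of_le_of_le' hlow tendsto_const_nhds
    · rw [eventually_atTop]
      refine ⟨e.symm x + 1, fun N hN => ?_⟩
      rw [le_div_iff₀ (hpos N)]
      exact hbd N hN
    · filter_upwards with N
      rw [div_le_one (hpos N)]
      exact_mod_cast Finset.card_le_card (hsub N)
  constructor
  · exact main (fun N => F N ∩ (F N).image (· + x)) (fun N => Finset.inter_subset_left)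
      (fun N hN => (hFbound N x (hmem N hN)).1)
  · exact main (fun N => F N ∩ (F N).image (x * ·)) (fun N => Finset.inter_subset_left)
      (fun N hN => (hFbound N x (hmem N hN)).2)
end

section
/- Let K be a countable field with a measure preserving action of the affine group A_K on a probability space (Ω, B, μ). Let P_A and P_M denote the orthogonal projections in L²(Ω,μ) onto the subspaces of functions fixed by the additive subgroup S_A and by the multiplicative subgroup S_M respectively. Then P_A P_M = P_M P_A. -/
open MeasureTheory

/-- A measure preserving action of the affine group `A_K = {x ↦ u*x + v : u ∈ K*, v ∈ K}`
of a field `K` on a measure space `(Ω, μ)`, described via the actions `TA` of the additive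
subgroup and `TM` of the multiplicative subgroup, together with the defining relation
`M_u ∘ A_v = A_{u*v} ∘ M_u` of the semidirect product. -/
structure AffineAction (K : Type*) [Field K] {Ω : Type*} [MeasurableSpace Ω]
    (μ : Measure Ω) where
  TA : K → Ω → Ω
  TM : K → Ω → Ω
  TA_zero : TA 0 = id
  TA_add : ∀ u v : K, TA (u + v) = TA u ∘ TA v
  TM_one : TM 1 = id
  TM_mul : ∀ u v : K, u ≠ 0 → v ≠ 0 → TM (u * v) = TM u ∘ TM v
  comm : ∀ u v : K, u ≠ 0 → TM u ∘ TA v = TA (u * v) ∘ TM u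
  TA_mp : ∀ u : K, MeasurePreserving (TA u) μ μ
  TM_mp : ∀ u : K, u ≠ 0 → MeasurePreserving (TM u) μ μ


section Aux

/-- Uniqueness of orthogonal projection onto a sub-closed set of vectors. -/
lemma proj_unique {E : Type*} [NormedAddCommGroup E] [InnerProductSpace ℝ E]
    {S : E → Prop} (hsub : ∀ a b, S a → S b → S (a - b)) {f p q : E}
    (hp : S p) (hq : S q)
    (hp' : ∀ g, S g → inner ℝ (f - p) g = (0 : ℝ))
    (hq' : ∀ g, S g → inner ℝ (f - q) g = (0 : ℝ)) : p = q := by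
  have hs : S (p - q) := hsub _ _ hp hq
  have h0 : inner ℝ (p - q) (p - q) = (0 : ℝ) := by
    have h1 := hp' _ hs
    have h2 := hq' _ hs
    have : inner ℝ ((f - q) - (f - p)) (p - q) = (0 : ℝ) := by
      rw [inner_sub_left, h1, h2]; ring
    simpa [sub_sub_sub_cancel_left] using this
  have := inner_self_eq_zero.mp h0
  exact sub_eq_zero.mp this

variable {Ω : Type*} [MeasurableSpace Ω] {μ : Measure Ω}

lemma inner_comp (T : Ω → Ω) (hT : MeasurePreserving T μ μ) (a b : Lp ℝ 2 μ) :
    inner ℝ (Lp.compMeasurePreserving T hT a) (Lp.compMeasurePreserving T hT b) =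
      (inner ℝ a b : ℝ) := by
  rw [L2.inner_def, L2.inner_def]
  have ha := Lp.coeFn_compMeasurePreserving a hT
  have hb := Lp.coeFn_compMeasurePreserving b hT
  have h1 : ∫ x, inner ℝ ((Lp.compMeasurePreserving T hT a : Lp ℝ 2 μ) x)
      ((Lp.compMeasurePreserving T hT b : Lp ℝ 2 μ) x) ∂μ
      = ∫ x, (a : Ω → ℝ) (T x) * (b : Ω → ℝ) (T x) ∂μ := by
    refine integral_congr_ae ?_
    filter_upwards [ha, hb] with x hx hy
    rw [RCLike.inner_apply, conj_trivial, hx, hy, Function.comp_apply, Function.comp_apply]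
    exact mul_comm _ _
  rw [h1]
  have hmeas : AEStronglyMeasurable (fun y => (a : Ω → ℝ) y * (b : Ω → ℝ) y)
      (Measure.map T μ) := by
    rw [hT.map_eq]
    exact (Lp.aestronglyMeasurable a).mul (Lp.aestronglyMeasurable b)
  have key : ∫ y, (a : Ω → ℝ) y * (b : Ω → ℝ) y ∂(Measure.map T μ)
      = ∫ x, (a : Ω → ℝ) (T x) * (b : Ω → ℝ) (T x) ∂μ :=
    integral_map hT.measurable.aemeasurable hmeas
  rw [hT.map_eq] at key
  rw [← key]
  simp [RCLike.inner_apply]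
  exact integral_congr_ae (Filter.Eventually.of_forall fun x => mul_comm _ _)

end Aux

/-- The orthogonal projections of `L²(Ω,μ)` onto the subspace of functions fixed by the
additive subgroup `S_A` and onto the subspace of functions fixed by the multiplicative
subgroup `S_M` commute.  Here `P_A` (resp. `P_M`) is characterized as the orthogonal
projection: `P f` is fixed by the subgroup and `f - P f` is orthogonal to every vector
fixed by the subgroup. -/
theorem projections_commute {K : Type*} [Field K] [Countable K]
    {Ω : Type*} [MeasurableSpace Ω] {μ : Measure Ω} [IsProbabilityMeasure μ]
    (act : AffineAction K μ)
    (PA PM : Lp ℝ 2 μ →L[ℝ] Lp ℝ 2 μ)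
    (hPA : ∀ f : Lp ℝ 2 μ,
      (∀ u : K, ((PA f : Ω → ℝ) ∘ act.TA u) =ᵐ[μ] (PA f : Ω → ℝ)) ∧
      (∀ g : Lp ℝ 2 μ, (∀ u : K, ((g : Ω → ℝ) ∘ act.TA u) =ᵐ[μ] (g : Ω → ℝ)) →
        inner ℝ (f - PA f) g = (0 : ℝ)))
    (hPM : ∀ f : Lp ℝ 2 μ,
      (∀ u : K, u ≠ 0 → ((PM f : Ω → ℝ) ∘ act.TM u) =ᵐ[μ] (PM f : Ω → ℝ)) ∧
      (∀ g : Lp ℝ 2 μ, (∀ u : K, u ≠ 0 → ((g : Ω → ℝ) ∘ act.TM u) =ᵐ[μ] (g : Ω → ℝ)) →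
        inner ℝ (f - PM f) g = (0 : ℝ))) :
    ∀ f : Lp ℝ 2 μ, PA (PM f) = PM (PA f) := by
  classical
  -- notation
  set FixA : Lp ℝ 2 μ → Prop :=
    fun g => ∀ u : K, ((g : Ω → ℝ) ∘ act.TA u) =ᵐ[μ] (g : Ω → ℝ) with hFixA
  set FixM : Lp ℝ 2 μ → Prop :=
    fun g => ∀ u : K, u ≠ 0 → ((g : Ω → ℝ) ∘ act.TM u) =ᵐ[μ] (g : Ω → ℝ) with hFixM
  -- sub-closedness
  have subA : ∀ a b, FixA a → FixA b → FixA (a - b) := by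
    intro a b ha hb u
    have hab : ((a - b : Lp ℝ 2 μ) : Ω → ℝ) =ᵐ[μ] (a : Ω → ℝ) - (b : Ω → ℝ) :=
      Lp.coeFn_sub a b
    have h1 : (((a - b : Lp ℝ 2 μ) : Ω → ℝ) ∘ act.TA u)
        =ᵐ[μ] (((a : Ω → ℝ) - (b : Ω → ℝ)) ∘ act.TA u) :=
      (act.TA_mp u).quasiMeasurePreserving.ae_eq_comp hab
    refine h1.trans ?_
    refine Filter.EventuallyEq.trans ?_ hab.symm
    filter_upwards [ha u, hb u] with x hx hy
    simp only [Pi.sub_apply, Function.comp] at *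
    rw [hx, hy]
  have subM : ∀ a b, FixM a → FixM b → FixM (a - b) := by
    intro a b ha hb u hu
    have hab : ((a - b : Lp ℝ 2 μ) : Ω → ℝ) =ᵐ[μ] (a : Ω → ℝ) - (b : Ω → ℝ) :=
      Lp.coeFn_sub a b
    have h1 : (((a - b : Lp ℝ 2 μ) : Ω → ℝ) ∘ act.TM u)
        =ᵐ[μ] (((a : Ω → ℝ) - (b : Ω → ℝ)) ∘ act.TM u) :=
      (act.TM_mp u hu).quasiMeasurePreserving.ae_eq_comp hab
    refine h1.trans ?_
    refine Filter.EventuallyEq.trans ?_ hab.symm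
    filter_upwards [ha u hu, hb u hu] with x hx hy
    simp only [Pi.sub_apply, Function.comp] at *
    rw [hx, hy]
  -- the composition operators
  set V : ∀ u : K, u ≠ 0 → Lp ℝ 2 μ →+ Lp ℝ 2 μ :=
    fun u hu => Lp.compMeasurePreserving (act.TM u) (act.TM_mp u hu) with hV
  have coeV : ∀ (u : K) (hu : u ≠ 0) (g : Lp ℝ 2 μ),
      (V u hu g : Ω → ℝ) =ᵐ[μ] (g : Ω → ℝ) ∘ act.TM u := fun u hu g =>
    Lp.coeFn_compMeasurePreserving g (act.TM_mp u hu)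
  have innerV : ∀ (u : K) (hu : u ≠ 0) (a b : Lp ℝ 2 μ),
      inner ℝ (V u hu a) (V u hu b) = (inner ℝ a b : ℝ) := fun u hu a b =>
    inner_comp (act.TM u) (act.TM_mp u hu) a b
  -- V u hu preserves FixA
  have VFixA : ∀ (u : K) (hu : u ≠ 0) (g : Lp ℝ 2 μ), FixA g → FixA (V u hu g) := by
    intro u hu g hg v
    have h1 : ((V u hu g : Ω → ℝ) ∘ act.TA v)
        =ᵐ[μ] (((g : Ω → ℝ) ∘ act.TM u) ∘ act.TA v) :=
      (act.TA_mp v).quasiMeasurePreserving.ae_eq_comp (coeV u hu g)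
    refine h1.trans ?_
    have h2 : ((g : Ω → ℝ) ∘ act.TM u) ∘ act.TA v
        = ((g : Ω → ℝ) ∘ act.TA (u * v)) ∘ act.TM u := by
      rw [Function.comp_assoc, act.comm u v hu, ← Function.comp_assoc]
    rw [h2]
    have h3 : (((g : Ω → ℝ) ∘ act.TA (u * v)) ∘ act.TM u)
        =ᵐ[μ] ((g : Ω → ℝ) ∘ act.TM u) :=
      (act.TM_mp u hu).quasiMeasurePreserving.ae_eq_comp (hg (u * v))
    exact h3.trans (coeV u hu g).symm
  -- V u hu ∘ V u⁻¹ = id on Lp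
  have Vinv : ∀ (u : K) (hu : u ≠ 0) (g : Lp ℝ 2 μ),
      V u hu (V u⁻¹ (inv_ne_zero hu) g) = g := by
    intro u hu g
    apply Lp.ext
    have h1 := coeV u hu (V u⁻¹ (inv_ne_zero hu) g)
    refine h1.trans ?_
    have h2 : ((V u⁻¹ (inv_ne_zero hu) g : Ω → ℝ) ∘ act.TM u)
        =ᵐ[μ] (((g : Ω → ℝ) ∘ act.TM u⁻¹) ∘ act.TM u) :=
      (act.TM_mp u hu).quasiMeasurePreserving.ae_eq_comp (coeV u⁻¹ (inv_ne_zero hu) g)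
    refine h2.trans ?_
    have h3 : ((g : Ω → ℝ) ∘ act.TM u⁻¹) ∘ act.TM u = (g : Ω → ℝ) := by
      rw [Function.comp_assoc, ← act.TM_mul u⁻¹ u (inv_ne_zero hu) hu,
        inv_mul_cancel₀ hu, act.TM_one, Function.comp_id]
    rw [h3]
  -- key: PA preserves FixM
  have PAFixM : ∀ f : Lp ℝ 2 μ, FixM f → FixM (PA f) := by
    intro f hf u hu
    -- show V u hu (PA f) = PA f
    have hVf : V u hu f = f := by
      apply Lp.ext
      exact (coeV u hu f).trans (hf u hu)
    have heq : V u hu (PA f) = PA f := by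
      refine proj_unique subA (f := f) (VFixA u hu _ (hPA f).1) (hPA f).1 ?_ (hPA f).2
      intro g hg
      have hfsub : f - V u hu (PA f) = V u hu (f - PA f) := by
        rw [map_sub, hVf]
      rw [hfsub, ← Vinv u hu g, innerV u hu]
      exact (hPA f).2 _ (VFixA u⁻¹ (inv_ne_zero hu) g hg)
    calc ((PA f : Ω → ℝ) ∘ act.TM u) =ᵐ[μ] ((V u hu (PA f) : Ω → ℝ)) := (coeV u hu (PA f)).symm
    _ =ᵐ[μ] (PA f : Ω → ℝ) := by rw [heq]
  -- PM acts as identity on FixM vectors (not needed) ; self-adjointness of PA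
  have PAsa : ∀ a b : Lp ℝ 2 μ, (inner ℝ (PA a) b : ℝ) = inner ℝ a (PA b) := by
    intro a b
    have h1 : inner ℝ (a - PA a) (PA b) = (0 : ℝ) := (hPA a).2 _ (hPA b).1
    have h2 : inner ℝ (b - PA b) (PA a) = (0 : ℝ) := (hPA b).2 _ (hPA a).1
    rw [inner_sub_left] at h1 h2
    have h1' : (inner ℝ a (PA b) : ℝ) = inner ℝ (PA a) (PA b) := by linarith [h1]
    have h2' : (inner ℝ b (PA a) : ℝ) = inner ℝ (PA b) (PA a) := by linarith [h2]
    calc (inner ℝ (PA a) b : ℝ) = inner ℝ b (PA a) := real_inner_comm _ _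
    _ = inner ℝ (PA b) (PA a) := h2'
    _ = inner ℝ (PA a) (PA b) := real_inner_comm _ _
    _ = inner ℝ a (PA b) := h1'.symm
  -- final argument
  intro f
  refine proj_unique subM (f := PA f) (PAFixM _ (hPM f).1) (hPM (PA f)).1 ?_ (hPM (PA f)).2
  intro g hg
  have hsplit : PA f - PA (PM f) = PA (f - PM f) := by rw [map_sub]
  rw [hsplit, PAsa]
  exact (hPM f).2 _ (PAFixM g hg)
end

section
/- Let X be a set, G a countable group acting on X, and (G_N) a sequence of finite subsets of X such that |G_N ∩ g·G_N|/|G_N| → 1 for every g ∈ G. Let E ⊂ X have positive upper density along (G_N). Then there exist a compact metric space Ω, a Borel probability measure μ, a μ-preserving G-action (T_g) on Ω, and a Borel set B ⊂ Ω with μ(B) equal to the upper density of E, such that for all g_1,…,g_k ∈ G, the upper density of g_1 E ∩ … ∩ g_k E along (G_N) is at least μ(T_{g_1}B ∩ … ∩ T_{g_k}B). -/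
open Filter MeasureTheory
open scoped Pointwise

open scoped Classical in
/-- The upper density of `E ⊆ X` along a sequence of finite subsets `GN` of `X`. -/
noncomputable def upperDensity {X : Type*} (GN : ℕ → Finset X) (E : Set X) : ℝ :=
  limsup (fun N => (((GN N).filter (fun x => x ∈ E)).card : ℝ) / (GN N).card) atTop

namespace FurstenbergAux

open Set TopologicalSpace
open scoped ENNReal NNReal

/-! ### Generalities -/

lemma isClopen_preimage_discrete {Z Y : Type*} [TopologicalSpace Z] [TopologicalSpace Y]
    [DiscreteTopology Y] {f : Z → Y} (hf : Continuous f) (S : Set Y) : IsClopen (f ⁻¹' S) :=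
  (isClopen_discrete S).preimage hf

/-- In the Cantor space `ℕ → Bool`, two disjoint compact sets can be separated by a
clopen set. -/
lemma exists_clopen_separating {K1 K2 : Set (ℕ → Bool)} (h1 : IsCompact K1) (h2 : IsCompact K2)
    (hd : Disjoint K1 K2) : ∃ D : Set (ℕ → Bool), IsClopen D ∧ K1 ⊆ D ∧ Disjoint D K2 := by
  by_contra hcon
  push_neg at hcon
  set rn : (n : ℕ) → (ℕ → Bool) → (Fin n → Bool) := fun n ω i => ω i with hrn
  have hrc : ∀ n, Continuous (rn n) := fun n => continuous_pi fun i => continuous_apply _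
  set D : ℕ → Set (ℕ → Bool) := fun n => rn n ⁻¹' (rn n '' K1) with hDdef
  have hDclopen : ∀ n, IsClopen (D n) := fun n => isClopen_preimage_discrete (hrc n) _
  have hK1D : ∀ n, K1 ⊆ D n := fun n => subset_preimage_image _ _
  have hanti : ∀ m n, m ≤ n → D n ⊆ D m := by
    intro m n hmn ω hω
    obtain ⟨x, hx, hxω⟩ := hω
    refine ⟨x, hx, ?_⟩
    funext i
    exact congrFun hxω ⟨(i : ℕ), lt_of_lt_of_le i.2 hmn⟩
  have hInt : (⋂ n, D n) ⊆ K1 := by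
    intro ω hω
    have hx : ∀ n, ∃ x, x ∈ K1 ∧ rn n x = rn n ω := fun n => mem_iInter.mp hω n
    choose x hxK hxr using hx
    obtain ⟨a, haK, ψ, hψ, hlim⟩ := h1.tendsto_subseq hxK
    have haω : a = ω := by
      funext i
      have hta : Tendsto (fun n => x (ψ n) i) atTop (nhds (a i)) :=
        ((continuous_apply i).tendsto a).comp hlim
      have hev : ∀ᶠ n in atTop, x (ψ n) i = ω i := by
        filter_upwards [eventually_ge_atTop (i + 1)] with n hn
        have hlt : i < ψ n := lt_of_lt_of_le (Nat.lt_succ_self i) (hn.trans hψ.le_apply)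
        exact congrFun (hxr (ψ n)) ⟨i, hlt⟩
      have htw : Tendsto (fun n => x (ψ n) i) atTop (nhds (ω i)) :=
        tendsto_const_nhds.congr' (hev.mono fun n h => h.symm)
      exact tendsto_nhds_unique hta htw
    exact haω ▸ haK
  have hne2 : ∀ n, (D n ∩ K2).Nonempty := by
    intro n
    rcases Set.not_disjoint_iff.mp (hcon (D n) (hDclopen n) (hK1D n)) with ⟨y, hy1, hy2⟩
    exact ⟨y, hy1, hy2⟩
  have hnon := IsCompact.nonempty_iInter_of_sequence_nonempty_isCompact_isClosed
    (fun n => D n ∩ K2)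
    (fun n => inter_subset_inter_left _ (hanti n (n + 1) (Nat.le_succ n)))
    hne2
    (h2.inter_left (hDclopen 0).isClosed)
    (fun n => (hDclopen n).isClosed.inter h2.isClosed)
  obtain ⟨ω, hω⟩ := hnon
  have hω1 : ω ∈ K1 := hInt (mem_iInter.mpr fun n => (mem_iInter.mp hω n).1)
  have hω2 : ω ∈ K2 := (mem_iInter.mp hω 0).2
  exact Set.disjoint_left.mp hd hω1 hω2

/-! ### The coded action on Cantor space -/

variable {G : Type*} [Group G]

open scoped Classical in
/-- The action of `G` on `ℕ → Bool` obtained by transporting the left regular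
representation through an injection `e : G → ℕ`. -/
noncomputable def Tact (e : G → ℕ) (g : G) (ω : ℕ → Bool) : ℕ → Bool := fun n =>
  if h : ∃ a, e a = n then ω (e (g⁻¹ * h.choose)) else ω n

lemma Tact_apply (e : G → ℕ) (he : Function.Injective e) (g : G) (ω : ℕ → Bool) (a : G) :
    Tact e g ω (e a) = ω (e (g⁻¹ * a)) := by
  classical
  have h : ∃ b, e b = e a := ⟨a, rfl⟩
  have h1 : Tact e g ω (e a) = ω (e (g⁻¹ * h.choose)) := dif_pos h
  rw [h1, he h.choose_spec]

lemma Tact_not (e : G → ℕ) (g : G) (ω : ℕ → Bool) {n : ℕ} (hn : ¬ ∃ a, e a = n) :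
    Tact e g ω n = ω n := by
  classical
  exact dif_neg hn

lemma Tact_one (e : G → ℕ) : Tact e (1 : G) = id := by
  classical
  funext ω n
  by_cases h : ∃ a, e a = n
  · have h1 : Tact e 1 ω n = ω (e ((1:G)⁻¹ * h.choose)) := dif_pos h
    rw [h1, inv_one, one_mul, h.choose_spec]
    rfl
  · exact Tact_not e 1 ω h

lemma Tact_mul (e : G → ℕ) (he : Function.Injective e) (g h : G) :
    Tact e (g * h) = Tact e g ∘ Tact e h := by
  funext ω n
  by_cases hn : ∃ a, e a = n
  · obtain ⟨a, rfl⟩ := hn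
    rw [Function.comp_apply, Tact_apply e he, Tact_apply e he, Tact_apply e he,
      mul_inv_rev, mul_assoc]
  · rw [Function.comp_apply, Tact_not e _ _ hn, Tact_not e _ _ hn, Tact_not e _ _ hn]

lemma continuous_Tact (e : G → ℕ) (g : G) : Continuous (Tact e g) := by
  classical
  refine continuous_pi fun n => ?_
  by_cases h : ∃ a, e a = n
  · have : (fun ω => Tact e g ω n) = fun ω : ℕ → Bool => ω (e (g⁻¹ * h.choose)) := by
      funext ω; exact dif_pos h
    rw [this]; exact continuous_apply _
  · have : (fun ω => Tact e g ω n) = fun ω : ℕ → Bool => ω n := by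
      funext ω; exact dif_neg h
    rw [this]; exact continuous_apply _

open scoped Classical in
/-- The Furstenberg coding map `X → (ℕ → Bool)`. -/
noncomputable def phi {X : Type*} [MulAction G X] (e : G → ℕ) (E : Set X) (x : X) :
    ℕ → Bool := fun n =>
  if h : ∃ a, e a = n then decide (h.choose⁻¹ • x ∈ E) else false

open scoped Classical in
lemma phi_apply {X : Type*} [MulAction G X] (e : G → ℕ) (he : Function.Injective e)
    (E : Set X) (x : X) (a : G) : phi e E x (e a) = decide (a⁻¹ • x ∈ E) := by
  have h : ∃ b, e b = e a := ⟨a, rfl⟩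
  have h1 : phi e E x (e a) = decide (h.choose⁻¹ • x ∈ E) := dif_pos h
  rw [h1, he h.choose_spec]

open scoped Classical in
lemma phi_not {X : Type*} [MulAction G X] (e : G → ℕ) (E : Set X) (x : X) {n : ℕ}
    (hn : ¬ ∃ a, e a = n) : phi e E x n = false := dif_neg hn

lemma Tact_phi {X : Type*} [MulAction G X] (e : G → ℕ) (he : Function.Injective e)
    (E : Set X) (g : G) (x : X) : Tact e g (phi e E x) = phi e E (g • x) := by
  classical
  funext n
  by_cases hn : ∃ a, e a = n
  · obtain ⟨a, rfl⟩ := hn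
    rw [Tact_apply e he, phi_apply e he, phi_apply e he]
    congr 1
    rw [mul_inv_rev, inv_inv, mul_smul]
  · rw [Tact_not e _ _ hn, phi_not e E x hn, phi_not e E (g • x) hn]

lemma Tact_image (e : G → ℕ) (he : Function.Injective e) (g : G) :
    Tact e g '' {ω : ℕ → Bool | ω (e 1) = true} = {ω : ℕ → Bool | ω (e g) = true} := by
  ext ω
  constructor
  · rintro ⟨b, hb, rfl⟩
    show Tact e g b (e g) = true
    rw [Tact_apply e he, inv_mul_cancel]
    exact hb
  · intro hω
    refine ⟨Tact e g⁻¹ ω, ?_, ?_⟩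
    · show Tact e g⁻¹ ω (e 1) = true
      rw [Tact_apply e he, inv_inv, mul_one]
      exact hω
    · have : Tact e g (Tact e g⁻¹ ω) = Tact e (g * g⁻¹) ω := by
        rw [Tact_mul e he]; rfl
      rw [this, mul_inv_cancel, Tact_one]; rfl

/-! ### Density sequences -/

section cardlemmas

variable {X : Type*}

lemma card_filter_mem_univ (s : Finset X) [DecidablePred (fun x => x ∈ (Set.univ : Set X))] :
    (s.filter (fun x => x ∈ (Set.univ : Set X))) = s := by
  ext x; simp

lemma card_filter_mem_union_le [DecidableEq X] (s : Finset X) (A B : Set X)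
    [DecidablePred (fun x => x ∈ A)] [DecidablePred (fun x => x ∈ B)]
    [DecidablePred (fun x => x ∈ A ∪ B)] :
    (s.filter (fun x => x ∈ A ∪ B)).card
      ≤ (s.filter (fun x => x ∈ A)).card + (s.filter (fun x => x ∈ B)).card := by
  refine le_trans (Finset.card_le_card ?_) (Finset.card_union_le _ _)
  intro x hx
  rw [Finset.mem_filter] at hx
  rcases (hx.2 : x ∈ A ∨ x ∈ B) with h | h
  · exact Finset.mem_union_left _ (Finset.mem_filter.mpr ⟨hx.1, h⟩)
  · exact Finset.mem_union_right _ (Finset.mem_filter.mpr ⟨hx.1, h⟩)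

lemma card_filter_mem_union_eq [DecidableEq X] (s : Finset X) (A B : Set X) (hAB : Disjoint A B)
    [DecidablePred (fun x => x ∈ A)] [DecidablePred (fun x => x ∈ B)]
    [DecidablePred (fun x => x ∈ A ∪ B)] :
    (s.filter (fun x => x ∈ A ∪ B)).card
      = (s.filter (fun x => x ∈ A)).card + (s.filter (fun x => x ∈ B)).card := by
  classical
  have h0 : s.filter (fun x => x ∈ A ∪ B)
      = (s.filter (fun x => x ∈ A)) ∪ (s.filter (fun x => x ∈ B)) := by
    ext x
    simp only [Finset.mem_filter, Finset.mem_union, Set.mem_union]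
    tauto
  rw [h0]
  refine Finset.card_union_of_disjoint ?_
  rw [Finset.disjoint_left]
  intro x hx1 hx2
  rw [Finset.mem_filter] at hx1 hx2
  exact (Set.disjoint_left.mp hAB hx1.2) hx2.2

end cardlemmas

open scoped Classical in
/-- The density sequence of a set `A` along `GN`. -/
noncomputable def densSeq {X : Type*} (GN : ℕ → Finset X) (A : Set X) (N : ℕ) : ℝ :=
  (((GN N).filter (fun x => x ∈ A)).card : ℝ) / (GN N).card

lemma upperDensity_eq {X : Type*} (GN : ℕ → Finset X) (A : Set X) :
    upperDensity GN A = limsup (densSeq GN A) atTop := rfl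

section dens

variable {X : Type*}

lemma card_pos (GN : ℕ → Finset X) (hne : ∀ N, (GN N).Nonempty) (N : ℕ) :
    (0 : ℝ) < (GN N).card := by
  exact_mod_cast Finset.card_pos.mpr (hne N)

lemma densSeq_mem_Icc (GN : ℕ → Finset X) (hne : ∀ N, (GN N).Nonempty) (A : Set X) (N : ℕ) :
    densSeq GN A N ∈ Icc (0:ℝ) 1 := by
  classical
  constructor
  · unfold densSeq; positivity
  · unfold densSeq
    rw [div_le_one (card_pos GN hne N)]
    exact_mod_cast Finset.card_le_card (Finset.filter_subset _ _)

lemma densSeq_mono (GN : ℕ → Finset X) {A B : Set X} (h : A ⊆ B) (N : ℕ) :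
    densSeq GN A N ≤ densSeq GN B N := by
  classical
  unfold densSeq
  gcongr

lemma densSeq_univ (GN : ℕ → Finset X) (hne : ∀ N, (GN N).Nonempty) (N : ℕ) :
    densSeq GN univ N = 1 := by
  unfold densSeq
  rw [card_filter_mem_univ]
  exact div_self (card_pos GN hne N).ne'

lemma densSeq_union_le (GN : ℕ → Finset X) (hne : ∀ N, (GN N).Nonempty) (A B : Set X)
    (N : ℕ) : densSeq GN (A ∪ B) N ≤ densSeq GN A N + densSeq GN B N := by
  unfold densSeq
  rw [← add_div, div_le_div_iff_of_pos_right (card_pos GN hne N)]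
  exact_mod_cast @card_filter_mem_union_le X (Classical.decEq X) (GN N) A B
    (fun a => Classical.propDecidable _) (fun a => Classical.propDecidable _)
    (fun a => Classical.propDecidable _)

lemma densSeq_union (GN : ℕ → Finset X) (A B : Set X) (hAB : Disjoint A B) (N : ℕ) :
    densSeq GN (A ∪ B) N = densSeq GN A N + densSeq GN B N := by
  unfold densSeq
  rw [← add_div]
  congr 1
  exact_mod_cast @card_filter_mem_union_eq X (Classical.decEq X) (GN N) A B hAB
    (fun a => Classical.propDecidable _) (fun a => Classical.propDecidable _)
    (fun a => Classical.propDecidable _)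

end dens

open scoped Classical in
/-- Key combinatorial estimate: the density of `(g • ·) ⁻¹' A` differs from that of `A`
by at most twice the Følner defect. -/
lemma densSeq_smul_bound {X G : Type*} [Group G] [MulAction G X]
    (GN : ℕ → Finset X) (hne : ∀ N, (GN N).Nonempty) (g : G) (A : Set X) (N : ℕ) :
    |densSeq GN ((g • ·) ⁻¹' A) N - densSeq GN A N|
      ≤ 2 * (1 - ((GN N ∩ (GN N).image (g • ·)).card : ℝ) / (GN N).card) := by
  classical
  set S := GN N with hS
  set S' := S.image (g • ·) with hS'
  have hinj : Function.Injective (g • · : X → X) := MulAction.injective g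
  have hcard : S'.card = S.card := Finset.card_image_of_injective S hinj
  have hfilter : (S.filter (fun x => x ∈ (g • ·) ⁻¹' A)).card
      = (S'.filter (fun x => x ∈ A)).card := by
    rw [hS', Finset.filter_image]
    rw [Finset.card_image_of_injective _ hinj]
    exact congrArg Finset.card (Finset.filter_congr fun x _ => Iff.rfl)
  have key : ∀ A' B' : Finset X, (A'.filter (fun x => x ∈ A)).card
      ≤ (B'.filter (fun x => x ∈ A)).card + (A' \ B').card := by
    intro A' B'
    have hsub : A'.filter (fun x => x ∈ A) ⊆ B'.filter (fun x => x ∈ A) ∪ (A' \ B') := by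
      intro x hx
      rw [Finset.mem_filter] at hx
      by_cases hxB : x ∈ B'
      · exact Finset.mem_union_left _ (Finset.mem_filter.mpr ⟨hxB, hx.2⟩)
      · exact Finset.mem_union_right _ (Finset.mem_sdiff.mpr ⟨hx.1, hxB⟩)
    exact (Finset.card_le_card hsub).trans (Finset.card_union_le _ _)
  have e1 := Finset.card_sdiff_add_card_inter S' S
  have e2 := Finset.card_sdiff_add_card_inter S S'
  rw [Finset.inter_comm] at e1
  have e1' : ((S' \ S).card : ℝ) + ((S ∩ S').card : ℝ) = S.card := by
    rw [← hcard]; exact_mod_cast e1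
  have e2' : ((S \ S').card : ℝ) + ((S ∩ S').card : ℝ) = S.card := by exact_mod_cast e2
  have hA1 : ((S'.filter (fun x => x ∈ A)).card : ℝ)
      ≤ (S.filter (fun x => x ∈ A)).card + ((S' \ S).card : ℝ) := by
    exact_mod_cast key S' S
  have hA2 : ((S.filter (fun x => x ∈ A)).card : ℝ)
      ≤ (S'.filter (fun x => x ∈ A)).card + ((S \ S').card : ℝ) := by
    exact_mod_cast key S S'
  have hn : (0:ℝ) < S.card := card_pos GN hne N
  have hglhs : densSeq GN ((g • ·) ⁻¹' A) N = ((S'.filter (fun x => x ∈ A)).card : ℝ) / S.card := by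
    unfold densSeq
    simp only [Finset.filter_congr_decidable, ← hfilter]
    rfl
  have hgrhs : densSeq GN A N = ((S.filter (fun x => x ∈ A)).card : ℝ) / S.card := rfl
  have habs : |((S'.filter (fun x => x ∈ A)).card : ℝ) - ((S.filter (fun x => x ∈ A)).card : ℝ)|
      ≤ 2 * ((S.card : ℝ) - ((S ∩ S').card : ℝ)) := by
    rw [abs_sub_le_iff]
    constructor <;> linarith
  have hrhs : 2 * (1 - ((S ∩ S').card : ℝ) / S.card)
      = (2 * ((S.card : ℝ) - ((S ∩ S').card : ℝ))) / S.card := by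
    field_simp
  rw [hglhs, hgrhs, div_sub_div_same, abs_div, abs_of_pos hn, hrhs]
  gcongr

/-! ### From a limit functional to a measure, via contents -/

section contentpart

instance instNonemptyClopenSup (K : Set (ℕ → Bool)) :
    Nonempty {D : Set (ℕ → Bool) // IsClopen D ∧ K ⊆ D} :=
  ⟨⟨univ, isClopen_univ, subset_univ K⟩⟩

/-- Outer regularization of a clopen-set functional. -/
noncomputable def lamE (Lr : Set (ℕ → Bool) → ℝ) (K : Set (ℕ → Bool)) : ℝ≥0∞ :=
  ⨅ D : {D : Set (ℕ → Bool) // IsClopen D ∧ K ⊆ D}, ENNReal.ofReal (Lr D.1)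

lemma lamE_le_one (Lr : Set (ℕ → Bool) → ℝ) (huniv : Lr univ = 1) (K : Set (ℕ → Bool)) : lamE Lr K ≤ 1 := by
  refine (iInf_le _ ⟨univ, isClopen_univ, subset_univ K⟩).trans ?_
  rw [huniv, ENNReal.ofReal_one]

lemma lamE_ne_top (Lr : Set (ℕ → Bool) → ℝ) (huniv : Lr univ = 1) (K : Set (ℕ → Bool)) : lamE Lr K ≠ ⊤ :=
  ((lamE_le_one Lr huniv K).trans_lt ENNReal.one_lt_top).ne

lemma lamE_mono (Lr : Set (ℕ → Bool) → ℝ) {K K' : Set (ℕ → Bool)} (h : K ⊆ K') : lamE Lr K ≤ lamE Lr K' :=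
  le_iInf fun D => iInf_le _ (⟨D.1, D.2.1, h.trans D.2.2⟩ : {D : Set (ℕ → Bool) // IsClopen D ∧ K ⊆ D})

lemma lamE_clopen (Lr : Set (ℕ → Bool) → ℝ)
    (hmono : ∀ ⦃D D' : Set (ℕ → Bool)⦄, D ⊆ D' → Lr D ≤ Lr D') {C : Set (ℕ → Bool)} (hC : IsClopen C) :
    lamE Lr C = ENNReal.ofReal (Lr C) := by
  refine le_antisymm (iInf_le _ (⟨C, hC, subset_rfl⟩ : {D : Set (ℕ → Bool) // IsClopen D ∧ C ⊆ D})) ?_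
  exact le_iInf fun D => ENNReal.ofReal_le_ofReal (hmono D.2.2)

lemma lamE_union_le (Lr : Set (ℕ → Bool) → ℝ) (h01 : ∀ D, Lr D ∈ Icc (0:ℝ) 1)
    (hsub : ∀ D D', Lr (D ∪ D') ≤ Lr D + Lr D') (K K' : Set (ℕ → Bool)) :
    lamE Lr (K ∪ K') ≤ lamE Lr K + lamE Lr K' := by
  show lamE Lr (K ∪ K') ≤ (⨅ D : {D // IsClopen D ∧ K ⊆ D}, ENNReal.ofReal (Lr D.1)) + _
  rw [ENNReal.iInf_add]
  refine le_iInf fun D1 => ?_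
  show lamE Lr (K ∪ K') ≤ _ + ⨅ D : {D // IsClopen D ∧ K' ⊆ D}, ENNReal.ofReal (Lr D.1)
  rw [ENNReal.add_iInf]
  refine le_iInf fun D2 => ?_
  calc lamE Lr (K ∪ K') ≤ ENNReal.ofReal (Lr (D1.1 ∪ D2.1)) :=
        iInf_le _ (⟨D1.1 ∪ D2.1, D1.2.1.union D2.2.1, union_subset_union D1.2.2 D2.2.2⟩ : {D : Set (ℕ → Bool) // IsClopen D ∧ (K ∪ K') ⊆ D})
    _ ≤ ENNReal.ofReal (Lr D1.1 + Lr D2.1) := ENNReal.ofReal_le_ofReal (hsub _ _)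
    _ = _ := ENNReal.ofReal_add (h01 _).1 (h01 _).1

lemma lamE_add (Lr : Set (ℕ → Bool) → ℝ) (h01 : ∀ D, Lr D ∈ Icc (0:ℝ) 1)
    (hadd : ∀ ⦃D D' : Set (ℕ → Bool)⦄, Disjoint D D' → Lr (D ∪ D') = Lr D + Lr D')
    (hsub : ∀ D D', Lr (D ∪ D') ≤ Lr D + Lr D') {K1 K2 : Set (ℕ → Bool)} (h1 : IsCompact K1) (h2 : IsCompact K2)
    (hd : Disjoint K1 K2) : lamE Lr (K1 ∪ K2) = lamE Lr K1 + lamE Lr K2 := by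
  refine le_antisymm (lamE_union_le Lr h01 hsub K1 K2) ?_
  obtain ⟨Ds, hDs, hK1, hdisj⟩ := exists_clopen_separating h1 h2 hd
  have h3 : ∀ D : {D : Set (ℕ → Bool) // IsClopen D ∧ K1 ∪ K2 ⊆ D},
      lamE Lr K1 + lamE Lr K2 ≤ ENNReal.ofReal (Lr D.1) := by
    intro D
    have e1 : lamE Lr K1 ≤ ENNReal.ofReal (Lr (D.1 ∩ Ds)) :=
      iInf_le _ (⟨D.1 ∩ Ds, D.2.1.inter hDs,
        subset_inter ((subset_union_left).trans D.2.2) hK1⟩ : {D : Set (ℕ → Bool) // IsClopen D ∧ K1 ⊆ D})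
    have e2 : lamE Lr K2 ≤ ENNReal.ofReal (Lr (D.1 ∩ Dsᶜ)) :=
      iInf_le _ (⟨D.1 ∩ Dsᶜ, D.2.1.inter hDs.compl,
        subset_inter ((subset_union_right).trans D.2.2)
          (subset_compl_iff_disjoint_left.mpr hdisj)⟩ : {D : Set (ℕ → Bool) // IsClopen D ∧ K2 ⊆ D})
    calc lamE Lr K1 + lamE Lr K2
        ≤ ENNReal.ofReal (Lr (D.1 ∩ Ds)) + ENNReal.ofReal (Lr (D.1 ∩ Dsᶜ)) := add_le_add e1 e2
      _ = ENNReal.ofReal (Lr (D.1 ∩ Ds) + Lr (D.1 ∩ Dsᶜ)) :=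
          (ENNReal.ofReal_add (h01 _).1 (h01 _).1).symm
      _ = ENNReal.ofReal (Lr ((D.1 ∩ Ds) ∪ (D.1 ∩ Dsᶜ))) := by
          rw [hadd (Disjoint.mono inter_subset_right inter_subset_right disjoint_compl_right)]
      _ = ENNReal.ofReal (Lr D.1) := by rw [Set.inter_union_compl]
  exact le_iInf h3

/-- The content associated to the regularized functional. -/
noncomputable def contOf (Lr : Set (ℕ → Bool) → ℝ) (h01 : ∀ D, Lr D ∈ Icc (0:ℝ) 1)
    (hmono : ∀ ⦃D D' : Set (ℕ → Bool)⦄, D ⊆ D' → Lr D ≤ Lr D')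
    (hadd : ∀ ⦃D D' : Set (ℕ → Bool)⦄, Disjoint D D' → Lr (D ∪ D') = Lr D + Lr D')
    (hsub : ∀ D D', Lr (D ∪ D') ≤ Lr D + Lr D') (huniv : Lr univ = 1) : Content (ℕ → Bool) where
  toFun K := (lamE Lr K.1).toNNReal
  mono' K1 K2 h := ENNReal.toNNReal_mono (lamE_ne_top Lr huniv _) (lamE_mono Lr h)
  sup_disjoint' K1 K2 hd _ _ := by
    have hcoe : (K1 ⊔ K2).1 = K1.1 ∪ K2.1 := rfl
    show (lamE Lr (K1 ⊔ K2).1).toNNReal = (lamE Lr K1.1).toNNReal + (lamE Lr K2.1).toNNReal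
    rw [hcoe, lamE_add Lr h01 hadd hsub K1.2 K2.2 hd,
      ENNReal.toNNReal_add (lamE_ne_top Lr huniv _) (lamE_ne_top Lr huniv _)]
  sup_le' K1 K2 := by
    have hcoe : (K1 ⊔ K2).1 = K1.1 ∪ K2.1 := rfl
    show (lamE Lr (K1 ⊔ K2).1).toNNReal ≤ (lamE Lr K1.1).toNNReal + (lamE Lr K2.1).toNNReal
    rw [hcoe, ← ENNReal.toNNReal_add (lamE_ne_top Lr huniv _) (lamE_ne_top Lr huniv _)]
    exact ENNReal.toNNReal_mono
      (ENNReal.add_ne_top.mpr ⟨lamE_ne_top Lr huniv _, lamE_ne_top Lr huniv _⟩)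
      (lamE_union_le Lr h01 hsub _ _)

/-- The Borel probability measure on Cantor space associated to the functional. -/
noncomputable def muOf (Lr : Set (ℕ → Bool) → ℝ) (h01 : ∀ D, Lr D ∈ Icc (0:ℝ) 1)
    (hmono : ∀ ⦃D D' : Set (ℕ → Bool)⦄, D ⊆ D' → Lr D ≤ Lr D')
    (hadd : ∀ ⦃D D' : Set (ℕ → Bool)⦄, Disjoint D D' → Lr (D ∪ D') = Lr D + Lr D')
    (hsub : ∀ D D', Lr (D ∪ D') ≤ Lr D + Lr D') (huniv : Lr univ = 1) : Measure (ℕ → Bool) :=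
  (contOf Lr h01 hmono hadd hsub huniv).measure

lemma muOf_clopen (Lr : Set (ℕ → Bool) → ℝ) (h01 : ∀ D, Lr D ∈ Icc (0:ℝ) 1)
    (hmono : ∀ ⦃D D' : Set (ℕ → Bool)⦄, D ⊆ D' → Lr D ≤ Lr D')
    (hadd : ∀ ⦃D D' : Set (ℕ → Bool)⦄, Disjoint D D' → Lr (D ∪ D') = Lr D + Lr D')
    (hsub : ∀ D D', Lr (D ∪ D') ≤ Lr D + Lr D') (huniv : Lr univ = 1) {C : Set (ℕ → Bool)} (hC : IsClopen C) :
    muOf Lr h01 hmono hadd hsub huniv C = ENNReal.ofReal (Lr C) := by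
  rw [muOf, Content.measure_apply _ hC.isOpen.measurableSet,
    Content.outerMeasure_of_isOpen _ _ hC.isOpen,
    Content.innerContent_of_isCompact _ hC.isClosed.isCompact hC.isOpen]
  show (((lamE Lr C).toNNReal : ℝ≥0) : ℝ≥0∞) = _
  rw [ENNReal.coe_toNNReal (lamE_ne_top Lr huniv _), lamE_clopen Lr hmono hC]

lemma muOf_prob (Lr : Set (ℕ → Bool) → ℝ) (h01 : ∀ D, Lr D ∈ Icc (0:ℝ) 1)
    (hmono : ∀ ⦃D D' : Set (ℕ → Bool)⦄, D ⊆ D' → Lr D ≤ Lr D')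
    (hadd : ∀ ⦃D D' : Set (ℕ → Bool)⦄, Disjoint D D' → Lr (D ∪ D') = Lr D + Lr D')
    (hsub : ∀ D D', Lr (D ∪ D') ≤ Lr D + Lr D') (huniv : Lr univ = 1) : IsProbabilityMeasure (muOf Lr h01 hmono hadd hsub huniv) :=
  ⟨by rw [muOf_clopen Lr h01 hmono hadd hsub huniv isClopen_univ, huniv, ENNReal.ofReal_one]⟩

lemma isClopen_cylinder (fs : Finset ℕ) (S : Set (∀ _ : fs, Bool)) :
    IsClopen (cylinder (α := fun _ : ℕ => Bool) fs S) := by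
  have hc : Continuous (fs.restrict : (ℕ → Bool) → (∀ _ : fs, Bool)) :=
    continuous_pi fun i => continuous_apply (i : ℕ)
  exact isClopen_preimage_discrete hc S

lemma muOf_map (Lr : Set (ℕ → Bool) → ℝ) (h01 : ∀ D, Lr D ∈ Icc (0:ℝ) 1)
    (hmono : ∀ ⦃D D' : Set (ℕ → Bool)⦄, D ⊆ D' → Lr D ≤ Lr D')
    (hadd : ∀ ⦃D D' : Set (ℕ → Bool)⦄, Disjoint D D' → Lr (D ∪ D') = Lr D + Lr D')
    (hsub : ∀ D D', Lr (D ∪ D') ≤ Lr D + Lr D') (huniv : Lr univ = 1) (T : (ℕ → Bool) → (ℕ → Bool)) (hT : Continuous T)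
    (hinv : ∀ ⦃D : Set (ℕ → Bool)⦄, IsClopen D → Lr (T ⁻¹' D) = Lr D) :
    (muOf Lr h01 hmono hadd hsub huniv).map T = muOf Lr h01 hmono hadd hsub huniv := by
  haveI := muOf_prob Lr h01 hmono hadd hsub huniv
  haveI : IsProbabilityMeasure ((muOf Lr h01 hmono hadd hsub huniv).map T) :=
    Measure.isProbabilityMeasure_map hT.measurable.aemeasurable
  refine ext_of_generate_finite (measurableCylinders (fun _ : ℕ => Bool))
    generateFrom_measurableCylinders.symm isPiSystem_measurableCylinders (fun t ht => ?_) ?_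
  · obtain ⟨fs, S, _, rfl⟩ := (mem_measurableCylinders t).mp ht
    have hcl := isClopen_cylinder fs S
    rw [Measure.map_apply hT.measurable hcl.isOpen.measurableSet,
      muOf_clopen Lr h01 hmono hadd hsub huniv (hcl.preimage hT),
      muOf_clopen Lr h01 hmono hadd hsub huniv hcl, hinv hcl]
  · rw [Measure.map_apply hT.measurable MeasurableSet.univ, Set.preimage_univ]

end contentpart

/-! ### A limsup comparison -/

lemma le_limsup_of_tendsto_ultra {u : ℕ → ℝ} {U : Filter ℕ} [U.NeBot] (hle : U ≤ atTop)
    (hb : ∀ N, u N ≤ 1) {l : ℝ} (h : Tendsto u U (nhds l)) : l ≤ limsup u atTop := by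
  by_contra hlt
  push_neg at hlt
  have h1 : ∀ᶠ N in atTop, u N < (limsup u atTop + l) / 2 :=
    eventually_lt_of_limsup_lt (by linarith) (isBoundedUnder_of ⟨1, hb⟩)
  have h2 : l ≤ (limsup u atTop + l) / 2 :=
    le_of_tendsto h ((h1.filter_mono hle).mono fun N hN => hN.le)
  linarith

end FurstenbergAux

open FurstenbergAux Set

open scoped Classical in
/-- Furstenberg correspondence principle for an action of a countable group `G` on a
set `X` along a Følner-type sequence `(G_N)` of finite subsets of `X`. -/
theorem correspondence_principle {X : Type*} {G : Type*} [Group G] [Countable G]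
    [MulAction G X]
    (GN : ℕ → Finset X) (hne : ∀ N, (GN N).Nonempty)
    (hFol : ∀ g : G,
      Tendsto (fun N => ((GN N ∩ (GN N).image (g • ·)).card : ℝ) / (GN N).card)
        atTop (nhds 1))
    (E : Set X) (hE : 0 < upperDensity GN E) :
    ∃ (Ω : Type) (_ : MetricSpace Ω) (_ : CompactSpace Ω) (_ : MeasurableSpace Ω)
      (_ : BorelSpace Ω) (μ : Measure Ω) (T : G → Ω → Ω),
      IsProbabilityMeasure μ ∧
      (∀ g : G, MeasurePreserving (T g) μ μ) ∧
      T 1 = id ∧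
      (∀ g h : G, T (g * h) = T g ∘ T h) ∧
      ∃ B : Set Ω, MeasurableSet B ∧ (μ B).toReal = upperDensity GN E ∧
        ∀ (k : ℕ) (gs : Fin k → G),
          (μ (⋂ i, T (gs i) '' B)).toReal ≤ upperDensity GN (⋂ i, gs i • E) := by
  obtain ⟨e, he⟩ := exists_injective_nat G
  set d := upperDensity GN E with hd
  have hd0 : (0:ℝ) ≤ d := le_of_lt hE
  set φ : X → (ℕ → Bool) := phi e E with hφ
  -- the cluster ultrafilter
  have hNeBot : (atTop ⊓ comap (densSeq GN E) (nhds d)).NeBot := by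
    apply (Filter.map_neBot_iff (densSeq GN E)).mp
    rw [Filter.push_pull, inf_comm]
    have hcl : MapClusterPt d atTop (densSeq GN E) := by
      rw [mapClusterPt_iff_frequently]
      intro s hs
      obtain ⟨ε, hε, hball⟩ := Metric.mem_nhds_iff.mp hs
      have hbd : Filter.IsBoundedUnder (· ≤ ·) atTop (densSeq GN E) :=
        isBoundedUnder_of ⟨1, fun N => (densSeq_mem_Icc GN hne E N).2⟩
      have hcb : Filter.IsCoboundedUnder (· ≤ ·) atTop (densSeq GN E) :=
        Filter.IsBoundedUnder.isCoboundedUnder_le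
          (isBoundedUnder_of ⟨0, fun N => (densSeq_mem_Icc GN hne E N).1⟩)
      have hfr : ∃ᶠ N in atTop, d - ε/2 < densSeq GN E N := by
        refine Filter.frequently_lt_of_lt_limsup hcb ?_
        rw [hd, upperDensity_eq]; linarith
      have hev : ∀ᶠ N in atTop, densSeq GN E N < d + ε/2 := by
        refine Filter.eventually_lt_of_limsup_lt ?_ hbd
        rw [hd, upperDensity_eq] at *; linarith
      refine (hfr.and_eventually hev).mono fun N hN => hball ?_
      rw [Metric.mem_ball, Real.dist_eq, abs_sub_lt_iff]
      constructor <;> linarith [hN.1, hN.2]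
    exact hcl
  set U : Ultrafilter ℕ := @Ultrafilter.of _ (atTop ⊓ comap (densSeq GN E) (nhds d)) hNeBot
    with hUdef
  have hUle : (U : Filter ℕ) ≤ atTop ⊓ comap (densSeq GN E) (nhds d) :=
    @Ultrafilter.of_le _ _ hNeBot
  have hU1 : (U : Filter ℕ) ≤ atTop := hUle.trans inf_le_left
  have hU2 : Tendsto (densSeq GN E) U (nhds d) := by
    rw [Filter.tendsto_iff_comap]
    exact hUle.trans inf_le_right
  -- ultrafilter limits of density sequences
  have hLex : ∀ D : Set (ℕ → Bool), ∃ l, l ∈ Icc (0:ℝ) 1 ∧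
      Tendsto (densSeq GN (φ ⁻¹' D)) U (nhds l) := by
    intro D
    obtain ⟨l, hl, hle⟩ := (isCompact_Icc (a := (0:ℝ)) (b := 1)).ultrafilter_le_nhds
      (U.map (densSeq GN (φ ⁻¹' D))) (by
        rw [Ultrafilter.coe_map, Filter.le_principal_iff, Filter.mem_map]
        exact Filter.univ_mem' fun N => densSeq_mem_Icc GN hne _ N)
    refine ⟨l, hl, ?_⟩
    rwa [Ultrafilter.coe_map] at hle
  choose Lr hLr01 hLrT using hLex
  have Lr_unique : ∀ (D : Set (ℕ → Bool)) (l : ℝ),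
      Tendsto (densSeq GN (φ ⁻¹' D)) U (nhds l) → Lr D = l :=
    fun D l h => tendsto_nhds_unique (hLrT D) h
  have Lr_mono : ∀ ⦃D D' : Set (ℕ → Bool)⦄, D ⊆ D' → Lr D ≤ Lr D' := by
    intro D D' h
    refine le_of_tendsto_of_tendsto (hLrT D) (hLrT D') (Filter.Eventually.of_forall fun N => ?_)
    exact densSeq_mono GN (preimage_mono h) N
  have Lr_univ : Lr univ = 1 := by
    refine Lr_unique _ _ ?_
    have h : ∀ N, densSeq GN (φ ⁻¹' univ) N = 1 := fun N => by
      rw [preimage_univ]; exact densSeq_univ GN hne N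
    rw [tendsto_congr h]
    exact tendsto_const_nhds
  have Lr_add : ∀ ⦃D D' : Set (ℕ → Bool)⦄, Disjoint D D' → Lr (D ∪ D') = Lr D + Lr D' := by
    intro D D' hdisj
    refine Lr_unique _ _ ?_
    have h : ∀ N, densSeq GN (φ ⁻¹' (D ∪ D')) N
        = densSeq GN (φ ⁻¹' D) N + densSeq GN (φ ⁻¹' D') N := fun N => by
      rw [preimage_union]
      exact densSeq_union GN (φ ⁻¹' D) (φ ⁻¹' D') (hdisj.preimage φ) N
    rw [tendsto_congr h]
    exact (hLrT D).add (hLrT D')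
  have Lr_sub : ∀ D D' : Set (ℕ → Bool), Lr (D ∪ D') ≤ Lr D + Lr D' := by
    intro D D'
    refine le_of_tendsto_of_tendsto (hLrT _) ((hLrT D).add (hLrT D'))
      (Filter.Eventually.of_forall fun N => ?_)
    rw [preimage_union]
    exact densSeq_union_le GN hne _ _ N
  -- invariance of Lr
  have Lr_inv : ∀ (g : G) (D : Set (ℕ → Bool)), Lr (Tact e g ⁻¹' D) = Lr D := by
    intro g D
    have hpre : φ ⁻¹' (Tact e g ⁻¹' D) = (g • ·) ⁻¹' (φ ⁻¹' D) := by
      ext x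
      show Tact e g (φ x) ∈ D ↔ φ (g • x) ∈ D
      rw [hφ, Tact_phi e he E g x]
    have hkey : Tendsto (fun N => densSeq GN (φ ⁻¹' (Tact e g ⁻¹' D)) N
        - densSeq GN (φ ⁻¹' D) N) atTop (nhds 0) := by
      have hb : ∀ N, ‖densSeq GN (φ ⁻¹' (Tact e g ⁻¹' D)) N - densSeq GN (φ ⁻¹' D) N‖
          ≤ 2 * (1 - ((GN N ∩ (GN N).image (g • ·)).card : ℝ) / (GN N).card) := by
        intro N
        rw [Real.norm_eq_abs, hpre]
        exact densSeq_smul_bound GN hne g (φ ⁻¹' D) N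
      have h0 : Tendsto (fun N => 2 * (1 - ((GN N ∩ (GN N).image (g • ·)).card : ℝ)
          / (GN N).card)) atTop (nhds 0) := by
        have := (tendsto_const_nhds (x := (1:ℝ)) (f := atTop)).sub (hFol g)
        have h2 := this.const_mul (2:ℝ)
        simpa using h2
      exact squeeze_zero_norm hb h0
    refine Lr_unique _ _ ?_
    have h2 := (hkey.mono_left hU1).add (hLrT D)
    have h3 := h2.congr
      (fun N => by ring :
        ∀ N, (densSeq GN (φ ⁻¹' (Tact e g ⁻¹' D)) N - densSeq GN (φ ⁻¹' D) N)
          + densSeq GN (φ ⁻¹' D) N = densSeq GN (φ ⁻¹' (Tact e g ⁻¹' D)) N)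
    simpa using h3
  -- the measure
  haveI : (U : Filter ℕ).NeBot := U.neBot
  set μ : Measure (ℕ → Bool) := muOf Lr hLr01 Lr_mono Lr_add Lr_sub Lr_univ with hμ
  haveI hprob : IsProbabilityMeasure μ := muOf_prob Lr hLr01 Lr_mono Lr_add Lr_sub Lr_univ
  refine ⟨ℕ → Bool, TopologicalSpace.metrizableSpaceMetric _, inferInstance, inferInstance,
    inferInstance, μ, Tact e, hprob, ?_, Tact_one e, fun g h => Tact_mul e he g h, ?_⟩
  · -- measure preserving
    intro g
    refine ⟨(continuous_Tact e g).measurable, ?_⟩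
    exact muOf_map Lr hLr01 Lr_mono Lr_add Lr_sub Lr_univ (Tact e g) (continuous_Tact e g)
      (fun D _ => Lr_inv g D)
  · -- the set B
    refine ⟨{ω : ℕ → Bool | ω (e 1) = true}, ?_, ?_, ?_⟩
    · have hBeq : {ω : ℕ → Bool | ω (e 1) = true}
          = (fun ω : ℕ → Bool => ω (e 1)) ⁻¹' ({true} : Set Bool) := rfl
      have : IsClopen {ω : ℕ → Bool | ω (e 1) = true} := by
        rw [hBeq]
        exact isClopen_preimage_discrete (continuous_apply (e 1)) _
      exact this.isOpen.measurableSet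
    · -- measure of B
      have hB : IsClopen {ω : ℕ → Bool | ω (e 1) = true} := by
        rw [show {ω : ℕ → Bool | ω (e 1) = true}
            = (fun ω : ℕ → Bool => ω (e 1)) ⁻¹' ({true} : Set Bool) from rfl]
        exact isClopen_preimage_discrete (continuous_apply (e 1)) _
      rw [hμ, muOf_clopen Lr hLr01 Lr_mono Lr_add Lr_sub Lr_univ hB]
      have hBE : φ ⁻¹' {ω : ℕ → Bool | ω (e 1) = true} = E := by
        ext x
        show φ x (e 1) = true ↔ x ∈ E
        rw [hφ, phi_apply e he E x 1, decide_eq_true_eq, inv_one, one_smul]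
      have : Lr {ω : ℕ → Bool | ω (e 1) = true} = d := by
        refine Lr_unique _ _ ?_
        rw [hBE]; exact hU2
      rw [this, ENNReal.toReal_ofReal hd0]
    · -- intersections
      intro k gs
      have hCgs : (⋂ i, Tact e (gs i) '' {ω : ℕ → Bool | ω (e 1) = true})
          = {ω : ℕ → Bool | ∀ i, ω (e (gs i)) = true} := by
        have h1 : ∀ i, Tact e (gs i) '' {ω : ℕ → Bool | ω (e 1) = true}
            = {ω : ℕ → Bool | ω (e (gs i)) = true} := fun i => Tact_image e he (gs i)
        rw [iInter_congr h1]
        ext ω; simp [mem_iInter]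
      have hclC : IsClopen {ω : ℕ → Bool | ∀ i, ω (e (gs i)) = true} := by
        have hc : Continuous (fun (ω : ℕ → Bool) (i : Fin k) => ω (e (gs i))) :=
          continuous_pi fun i => continuous_apply _
        rw [show {ω : ℕ → Bool | ∀ i, ω (e (gs i)) = true}
            = (fun (ω : ℕ → Bool) (i : Fin k) => ω (e (gs i))) ⁻¹'
              {f : Fin k → Bool | ∀ i, f i = true} from rfl]
        exact isClopen_preimage_discrete hc _
      rw [hCgs, hμ, muOf_clopen Lr hLr01 Lr_mono Lr_add Lr_sub Lr_univ hclC]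
      have hpre : φ ⁻¹' {ω : ℕ → Bool | ∀ i, ω (e (gs i)) = true} = ⋂ i, gs i • E := by
        ext x
        show (∀ i, φ x (e (gs i)) = true) ↔ x ∈ ⋂ i, gs i • E
        rw [mem_iInter]
        refine forall_congr' fun i => ?_
        rw [hφ, phi_apply e he E x (gs i), decide_eq_true_eq,
          Set.mem_smul_set_iff_inv_smul_mem]
      have hLam : Tendsto (densSeq GN (⋂ i, gs i • E)) U
          (nhds (Lr {ω : ℕ → Bool | ∀ i, ω (e (gs i)) = true})) := by
        have := hLrT {ω : ℕ → Bool | ∀ i, ω (e (gs i)) = true}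
        rwa [hpre] at this
      have h01' := hLr01 {ω : ℕ → Bool | ∀ i, ω (e (gs i)) = true}
      rw [ENNReal.toReal_ofReal h01'.1, upperDensity_eq]
      exact le_limsup_of_tendsto_ultra hU1
        (fun N => (densSeq_mem_Icc GN hne (⋂ i, gs i • E) N).2) hLam
end

section
/- Let G be a group and R ⊂ G a set of recurrence. Then for every finite partition R = R_1 ∪ … ∪ R_r, at least one of the sets R_i is a set of recurrence. -/
open MeasureTheory

/-- `R ⊆ G` is a set of recurrence: for every measure preserving action of `G` on a
probability space and every measurable set `B` of positive measure, there is a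
non-identity `g ∈ R` with `μ(B ∩ T_g B) > 0`. -/
def IsSetOfRecurrence (G : Type*) [Group G] (R : Set G) : Prop :=
  ∀ (Ω : Type) (_ : MeasurableSpace Ω) (μ : Measure Ω), IsProbabilityMeasure μ →
    ∀ T : G → Ω → Ω, (∀ g, MeasurePreserving (T g) μ μ) → T 1 = id →
      (∀ g h : G, T (g * h) = T g ∘ T h) →
      ∀ B : Set Ω, MeasurableSet B → 0 < μ B →
        ∃ g ∈ R, g ≠ 1 ∧ 0 < μ (B ∩ T g '' B)

lemma isSetOfRecurrence_mono {G : Type*} [Group G] {R S : Set G}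
    (h : IsSetOfRecurrence G R) (hRS : R ⊆ S) : IsSetOfRecurrence G S := by
  intro Ω mΩ μ hμ T hT hT1 hTc B hB hBpos
  obtain ⟨g, hg, hg1, hpos⟩ := h Ω mΩ μ hμ T hT hT1 hTc B hB hBpos
  exact ⟨g, hRS hg, hg1, hpos⟩

lemma isSetOfRecurrence_union {G : Type*} [Group G] {A B : Set G}
    (h : IsSetOfRecurrence G (A ∪ B)) :
    IsSetOfRecurrence G A ∨ IsSetOfRecurrence G B := by
  by_contra hc
  push_neg at hc
  obtain ⟨hA, hB⟩ := hc
  unfold IsSetOfRecurrence at hA hB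
  push_neg at hA hB
  obtain ⟨Ω₁, m₁, μ₁, hμ₁, T₁, hT₁, hT₁1, hT₁c, B₁, hB₁, hB₁pos, h₁⟩ := hA
  obtain ⟨Ω₂, m₂, μ₂, hμ₂, T₂, hT₂, hT₂1, hT₂c, B₂, hB₂, hB₂pos, h₂⟩ := hB
  -- product system
  obtain ⟨g, hg, hg1, hpos⟩ := h (Ω₁ × Ω₂) inferInstance (μ₁.prod μ₂) inferInstance
    (fun g => Prod.map (T₁ g) (T₂ g))
    (fun g => (hT₁ g).prod (hT₂ g))
    (by show Prod.map (T₁ 1) (T₂ 1) = id; rw [hT₁1, hT₂1]; ext p <;> rfl)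
    (by intro g h
        show Prod.map (T₁ (g*h)) (T₂ (g*h)) = Prod.map (T₁ g) (T₂ g) ∘ Prod.map (T₁ h) (T₂ h)
        rw [hT₁c, hT₂c]; ext p <;> rfl)
    (B₁ ×ˢ B₂) (hB₁.prod hB₂)
    (by rw [Measure.prod_prod]; exact ENNReal.mul_pos hB₁pos.ne' hB₂pos.ne')
  have himg : Prod.map (T₁ g) (T₂ g) '' (B₁ ×ˢ B₂) = (T₁ g '' B₁) ×ˢ (T₂ g '' B₂) :=
    (Set.prod_image_image_eq).symm
  rw [himg, Set.prod_inter_prod, Measure.prod_prod] at hpos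
  obtain ⟨h1pos, h2pos⟩ := CanonicallyOrderedAdd.mul_pos.mp hpos
  rcases hg with hg | hg
  · exact absurd (h₁ g hg hg1) (by simpa using h1pos.ne')
  · exact absurd (h₂ g hg hg1) (by simpa using h2pos.ne')

/-- Sets of recurrence are partition regular: if a set of recurrence is partitioned into
finitely many pieces, one of the pieces is a set of recurrence. -/
theorem setOfRecurrence_partition_regular {G : Type*} [Group G] (R : Set G)
    (hR : IsSetOfRecurrence G R) (r : ℕ) (Rs : Fin r → Set G)
    (hcover : R = ⋃ i, Rs i) :
    ∃ i, IsSetOfRecurrence G (Rs i) := by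
  subst hcover
  induction r with
  | zero =>
    exfalso
    obtain ⟨g, hg, -, -⟩ := hR Unit inferInstance (Measure.dirac ()) inferInstance
      (fun _ => id) (fun _ => MeasurePreserving.id _) rfl (fun _ _ => rfl)
      Set.univ MeasurableSet.univ (by simp)
    simp at hg
  | succ n ih =>
    have hsplit : (⋃ i, Rs i) = Rs 0 ∪ ⋃ i : Fin n, Rs i.succ := by
      ext x
      simp only [Set.mem_iUnion, Set.mem_union]
      exact Fin.exists_fin_succ
    rw [hsplit] at hR
    rcases isSetOfRecurrence_union hR with h0 | hrest
    · exact ⟨0, h0⟩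
    · obtain ⟨i, hi⟩ := ih (fun i => Rs i.succ) hrest
      exact ⟨i.succ, hi⟩
end

section
/- For any finite field F and subsets E_1, E_2 ⊂ F with |E_1||E_2| > 6|F|, there exist u ∈ F* and y ∈ F such that u + y ∈ E_1 and u·y ∈ E_2. -/
open Finset

private def RR {F : Type*} [Field F] [Fintype F] [DecidableEq F] (s p : F) : ℕ :=
  (univ.filter fun u : F => u * (s - u) = p).card

private lemma quad_card_le_two {F : Type*} [Field F] [Fintype F] [DecidableEq F] (t c : F) :
    (univ.filter fun v : F => v * (t - v) = c).card ≤ 2 := by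
  rcases (univ.filter fun v : F => v * (t - v) = c).eq_empty_or_nonempty with h | ⟨v₀, hv₀⟩
  · simp [h]
  · have hv₀' : v₀ * (t - v₀) = c := (mem_filter.mp hv₀).2
    have hsub : (univ.filter fun v : F => v * (t - v) = c) ⊆ {v₀, t - v₀} := by
      intro v hv
      have hv' : v * (t - v) = c := (mem_filter.mp hv).2
      have hz : (v - v₀) * (v + v₀ - t) = 0 := by linear_combination hv₀' - hv'
      rcases mul_eq_zero.mp hz with h' | h'
      · simp [sub_eq_zero.mp h']
      · have : v = t - v₀ := by linear_combination h'
        simp [this]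
    exact (card_le_card hsub).trans ((card_insert_le _ _).trans (by simp))

private lemma sum_RR {F : Type*} [Field F] [Fintype F] [DecidableEq F] (s : F) :
    ∑ p : F, RR s p = Fintype.card F := by
  rw [← card_univ,
    card_eq_sum_card_fiberwise (f := fun u : F => u * (s - u)) (fun u _ => mem_univ _)]
  rfl

private lemma sum_RR_mul {F : Type*} [Field F] [Fintype F] [DecidableEq F] (s s' : F) :
    ∑ p : F, RR s p * RR s' p
      = (univ.filter fun uv : F × F => uv.1 * (s - uv.1) = uv.2 * (s' - uv.2)).card := by
  rw [card_eq_sum_card_fiberwise (f := fun uv : F × F => uv.1 * (s - uv.1))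
      (fun uv _ => mem_univ _)]
  refine Finset.sum_congr rfl fun p _ => ?_
  have : ((univ.filter fun uv : F × F => uv.1 * (s - uv.1) = uv.2 * (s' - uv.2)).filter
      fun uv => uv.1 * (s - uv.1) = p)
      = (univ.filter fun u : F => u * (s - u) = p) ×ˢ
        (univ.filter fun v : F => v * (s' - v) = p) := by
    ext ⟨u, v⟩
    simp only [mem_filter, mem_product, mem_univ, true_and]
    constructor
    · rintro ⟨h1, h2⟩; exact ⟨h2, by rw [← h1, h2]⟩
    · rintro ⟨h1, h2⟩; exact ⟨h1.trans h2.symm, h1⟩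
  rw [this, card_product]
  rfl

private lemma N_le_two {F : Type*} [Field F] [Fintype F] [DecidableEq F] (s s' : F) :
    (univ.filter fun uv : F × F => uv.1 * (s - uv.1) = uv.2 * (s' - uv.2)).card
      ≤ 2 * Fintype.card F := by
  rw [card_eq_sum_card_fiberwise (f := Prod.fst) (fun uv _ => mem_univ uv.1)]
  calc ∑ u : F, ((univ.filter fun uv : F × F =>
          uv.1 * (s - uv.1) = uv.2 * (s' - uv.2)).filter fun uv => uv.1 = u).card
      ≤ ∑ _u : F, 2 := by
        refine Finset.sum_le_sum fun u _ => ?_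
        have : (((univ.filter fun uv : F × F =>
            uv.1 * (s - uv.1) = uv.2 * (s' - uv.2)).filter fun uv => uv.1 = u)).card
            ≤ (univ.filter fun v : F => v * (s' - v) = u * (s - u)).card := by
          apply card_le_card_of_injOn (fun uv => uv.2)
          · intro uv huv
            simp only [mem_coe, mem_filter, mem_univ, true_and] at huv ⊢
            rw [← huv.1, huv.2]
          · intro x hx y hy hxy
            simp only [coe_filter, Set.mem_setOf_eq] at hx hy
            exact Prod.ext (hx.2.trans hy.2.symm) hxy
        exact this.trans (quad_card_le_two s' (u * (s - u)))
    _ = 2 * Fintype.card F := by simp [mul_comm]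

private lemma N_le_one {F : Type*} [Field F] [Fintype F] [DecidableEq F] {s s' : F}
    (h : s * s ≠ s' * s') :
    (univ.filter fun uv : F × F => uv.1 * (s - uv.1) = uv.2 * (s' - uv.2)).card
      ≤ Fintype.card F := by
  rw [← card_univ]
  apply card_le_card_of_injOn (fun uv => uv.1 + uv.2) (fun _ _ => mem_univ _)
  intro x hx y hy hxy
  simp only [coe_filter, Set.mem_setOf_eq] at hx hy
  have key : ∀ a b : F, a * (s - a) = b * (s' - b) →
      a * (s + s' - 2 * (a + b)) = (a + b) * (s' - (a + b)) := by
    intro a b hab; linear_combination hab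
  set w : F := x.1 + x.2 with hw
  have hxyw : y.1 + y.2 = w := by simpa [hw] using hxy.symm
  have h1 : x.1 * (s + s' - 2 * w) = w * (s' - w) := key x.1 x.2 hx.2
  have h2 : y.1 * (s + s' - 2 * w) = w * (s' - w) := by
    have := key y.1 y.2 hy.2
    rwa [hxyw] at this
  by_cases hc : s + s' - 2 * w = 0
  · exfalso
    have hz : w * (s' - w) = 0 := by rw [← h1, hc, mul_zero]
    rcases mul_eq_zero.mp hz with h' | h'
    · apply h
      have hs' : s' = -s := by
        rw [h'] at hc; linear_combination hc
      rw [hs']; ring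
    · have hws' : w = s' := by linear_combination -h'
      apply h
      have : s = s' := by rw [hws'] at hc; linear_combination hc
      rw [this]
  · have h1' : x.1 = y.1 := mul_right_cancel₀ hc (h1.trans h2.symm)
    have h2' : x.2 = y.2 := by
      have hxy' : x.1 + x.2 = y.1 + y.2 := hxy
      rw [h1'] at hxy'
      exact add_left_cancel hxy'
    exact Prod.ext h1' h2'

/-- For any finite field `F` and subsets `E₁, E₂ ⊆ F` with `|E₁||E₂| > 6|F|`, there exist
`u ∈ F*` and `y ∈ F` with `u + y ∈ E₁` and `u·y ∈ E₂`. -/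
theorem finite_field_sum_product {F : Type*} [Field F] [Fintype F] [DecidableEq F]
    (E₁ E₂ : Finset F) (h : 6 * Fintype.card F < E₁.card * E₂.card) :
    ∃ u y : F, u ≠ 0 ∧ u + y ∈ E₁ ∧ u * y ∈ E₂ := by
  classical
  set q : ℤ := (Fintype.card F : ℤ) with hq_def
  have hq1 : (1 : ℤ) ≤ q := by
    rw [hq_def]
    exact_mod_cast Fintype.card_pos (α := F)
  set c : F → F → ℤ := fun s p => (RR s p : ℤ) - 1 with hc_def
  -- Step A: inner correlation sums
  have stepA : ∀ s s' : F, ∑ p : F, c s p * c s' p ≤ if s * s = s' * s' then q else 0 := by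
    intro s s'
    have expand : ∑ p : F, c s p * c s' p
        = ((univ.filter fun uv : F × F =>
            uv.1 * (s - uv.1) = uv.2 * (s' - uv.2)).card : ℤ) - q := by
      have e1 : ∑ p : F, c s p * c s' p
          = (∑ p : F, (RR s p : ℤ) * (RR s' p : ℤ)) - (∑ p : F, (RR s p : ℤ))
            - (∑ p : F, (RR s' p : ℤ)) + (Fintype.card F : ℤ) := by
        rw [← Finset.sum_sub_distrib, ← Finset.sum_sub_distrib]
        rw [← Finset.card_univ, Finset.card_eq_sum_ones, Nat.cast_sum]
        rw [← Finset.sum_add_distrib]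
        refine Finset.sum_congr rfl fun p _ => ?_
        push_cast
        simp only [hc_def]
        ring
      rw [e1]
      have e2 : ∑ p : F, (RR s p : ℤ) * (RR s' p : ℤ) = ((∑ p : F, RR s p * RR s' p : ℕ) : ℤ) := by
        push_cast; rfl
      rw [e2, sum_RR_mul s s']
      have e3 : ∑ p : F, ((RR s p : ℤ)) = q := by
        rw [hq_def, ← sum_RR s]; push_cast; rfl
      have e4 : ∑ p : F, ((RR s' p : ℤ)) = q := by
        rw [hq_def, ← sum_RR s']; push_cast; rfl
      rw [e3, e4, hq_def]; ring
    rw [expand]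
    by_cases hss : s * s = s' * s'
    · rw [if_pos hss]
      have := N_le_two (F := F) s s'
      have : ((univ.filter fun uv : F × F =>
          uv.1 * (s - uv.1) = uv.2 * (s' - uv.2)).card : ℤ) ≤ 2 * q := by
        rw [hq_def]; exact_mod_cast this
      linarith
    · rw [if_neg hss]
      have := N_le_one (F := F) hss
      have : ((univ.filter fun uv : F × F =>
          uv.1 * (s - uv.1) = uv.2 * (s' - uv.2)).card : ℤ) ≤ q := by
        rw [hq_def]; exact_mod_cast this
      linarith
  -- Step A': for fixed s, sum over s' ∈ E₁
  have stepA' : ∀ s : F, ∑ s' ∈ E₁, (if s * s = s' * s' then q else 0) ≤ 2 * q := by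
    intro s
    rw [← Finset.sum_filter]
    rw [Finset.sum_const]
    have hsub : (E₁.filter fun s' => s * s = s' * s') ⊆ {s, -s} := by
      intro x hx
      have hx' : s * s = x * x := (mem_filter.mp hx).2
      have : (x - s) * (x + s) = 0 := by linear_combination -hx'
      rcases mul_eq_zero.mp this with h' | h'
      · simp [sub_eq_zero.mp h']
      · have : x = -s := by linear_combination h'
        simp [this]
    have hcard : (E₁.filter fun s' => s * s = s' * s').card ≤ 2 :=
      (card_le_card hsub).trans ((card_insert_le _ _).trans (by simp))
    calc (E₁.filter fun s' => s * s = s' * s').card • q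
        = ((E₁.filter fun s' => s * s = s' * s').card : ℤ) * q := by
          rw [nsmul_eq_mul]
      _ ≤ 2 * q := by
          have : ((E₁.filter fun s' => s * s = s' * s').card : ℤ) ≤ 2 := by exact_mod_cast hcard
          nlinarith
  -- Step B: Cauchy–Schwarz
  set g : F → ℤ := fun p => ∑ s ∈ E₁, c s p with hg_def
  set X : ℤ := ∑ p ∈ E₂, g p with hX_def
  have hCS : X ^ 2 ≤ (E₂.card : ℤ) * ∑ p ∈ E₂, (g p) ^ 2 := by
    rw [hX_def]; exact sq_sum_le_card_mul_sum_sq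
  have hsq : ∑ p ∈ E₂, (g p) ^ 2 ≤ ∑ p : F, (g p) ^ 2 :=
    Finset.sum_le_sum_of_subset_of_nonneg (subset_univ E₂) (fun p _ _ => sq_nonneg _)
  have hsum_sq : ∑ p : F, (g p) ^ 2 ≤ (E₁.card : ℤ) * (2 * q) := by
    have e1 : ∑ p : F, (g p) ^ 2 = ∑ s ∈ E₁, ∑ s' ∈ E₁, ∑ p : F, c s p * c s' p := by
      simp_rw [hg_def, sq, Finset.sum_mul_sum]
      rw [Finset.sum_comm]
      refine Finset.sum_congr rfl fun s _ => ?_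
      rw [Finset.sum_comm]
    rw [e1]
    calc ∑ s ∈ E₁, ∑ s' ∈ E₁, ∑ p : F, c s p * c s' p
        ≤ ∑ s ∈ E₁, ∑ s' ∈ E₁, (if s * s = s' * s' then q else 0) :=
          Finset.sum_le_sum fun s _ => Finset.sum_le_sum fun s' _ => stepA s s'
      _ ≤ ∑ _s ∈ E₁, 2 * q := Finset.sum_le_sum fun s _ => stepA' s
      _ = (E₁.card : ℤ) * (2 * q) := by rw [Finset.sum_const, nsmul_eq_mul]
  set P : ℤ := (E₁.card : ℤ) * (E₂.card : ℤ) with hP_def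
  have hX2 : X ^ 2 ≤ 2 * q * P := by
    calc X ^ 2 ≤ (E₂.card : ℤ) * ∑ p ∈ E₂, (g p) ^ 2 := hCS
      _ ≤ (E₂.card : ℤ) * ((E₁.card : ℤ) * (2 * q)) := by
          have h2 : (0 : ℤ) ≤ (E₂.card : ℤ) := Nat.cast_nonneg _
          exact mul_le_mul_of_nonneg_left (hsq.trans hsum_sq) h2
      _ = 2 * q * P := by rw [hP_def]; ring
  have hP : 6 * q < P := by rw [hq_def, hP_def]; exact_mod_cast h
  -- Step C/D: the count M
  have hM_eq : ∑ s ∈ E₁, ∑ p ∈ E₂, (RR s p : ℤ) = P + X := by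
    have : ∀ s : F, ∑ p ∈ E₂, (RR s p : ℤ) = (E₂.card : ℤ) + ∑ p ∈ E₂, c s p := by
      intro s
      calc ∑ p ∈ E₂, (RR s p : ℤ) = ∑ p ∈ E₂, (c s p + 1) := by
            refine Finset.sum_congr rfl fun p _ => ?_
            simp [hc_def]
        _ = (∑ p ∈ E₂, c s p) + E₂.card := by
            rw [Finset.sum_add_distrib, Finset.sum_const, nsmul_eq_mul, mul_one]
        _ = (E₂.card : ℤ) + ∑ p ∈ E₂, c s p := by ring
    calc ∑ s ∈ E₁, ∑ p ∈ E₂, (RR s p : ℤ)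
        = ∑ s ∈ E₁, ((E₂.card : ℤ) + ∑ p ∈ E₂, c s p) :=
          Finset.sum_congr rfl fun s _ => this s
      _ = (E₁.card : ℤ) * (E₂.card : ℤ) + ∑ s ∈ E₁, ∑ p ∈ E₂, c s p := by
          rw [Finset.sum_add_distrib, Finset.sum_const, nsmul_eq_mul]
      _ = P + X := by
          rw [hP_def, hX_def, hg_def]
          rw [Finset.sum_comm]
  have hM : q < ∑ s ∈ E₁, ∑ p ∈ E₂, (RR s p : ℤ) := by
    rw [hM_eq]
    nlinarith [sq_nonneg (X + P - q), hX2, hP, hq1]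
  -- Step E: extract witness
  by_contra hcon
  push_neg at hcon
  have hTs : ∀ s ∈ E₁, (univ.filter fun u : F => u * (s - u) ∈ E₂) ⊆ {0} := by
    intro s hs u hu
    simp only [mem_filter, mem_univ, true_and] at hu
    by_contra hu0
    simp only [mem_singleton] at hu0
    have := hcon u (s - u) hu0
    rw [add_sub_cancel] at this
    exact this hs hu
  have hfib : ∀ s : F, ∑ p ∈ E₂, (RR s p : ℤ)
      = ((univ.filter fun u : F => u * (s - u) ∈ E₂).card : ℤ) := by
    intro s
    have : (univ.filter fun u : F => u * (s - u) ∈ E₂).card = ∑ p ∈ E₂, RR s p := by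
      rw [card_eq_sum_card_fiberwise (f := fun u : F => u * (s - u))
          (s := univ.filter fun u : F => u * (s - u) ∈ E₂) (t := E₂)
          (fun u hu => (mem_filter.mp hu).2)]
      refine Finset.sum_congr rfl fun p hp => ?_
      congr 1
      rw [Finset.filter_filter]
      apply Finset.filter_congr
      intro u _
      constructor
      · rintro ⟨_, h2⟩; exact h2
      · intro h2; exact ⟨h2 ▸ hp, h2⟩
    rw [this]; push_cast; rfl
  have hle : ∑ s ∈ E₁, ∑ p ∈ E₂, (RR s p : ℤ) ≤ (E₁.card : ℤ) := by
    calc ∑ s ∈ E₁, ∑ p ∈ E₂, (RR s p : ℤ)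
        = ∑ s ∈ E₁, ((univ.filter fun u : F => u * (s - u) ∈ E₂).card : ℤ) :=
          Finset.sum_congr rfl fun s _ => hfib s
      _ ≤ ∑ _s ∈ E₁, (1 : ℤ) := by
          refine Finset.sum_le_sum fun s hs => ?_
          have := card_le_card (hTs s hs)
          simp only [card_singleton] at this
          exact_mod_cast this
      _ = (E₁.card : ℤ) := by rw [Finset.sum_const, nsmul_eq_mul, mul_one]
  have hE1q : (E₁.card : ℤ) ≤ q := by
    rw [hq_def]; exact_mod_cast Finset.card_le_univ E₁
  linarith
end

section
/- Let d ∈ ℕ and F a finite field. For every B ⊂ F^d with |B| > √6 · |F|^{d - 1/2} and every α = (α_1,…,α_d) ∈ (F*)^d, there exist y ∈ F^d and u ∈ F* such that both y + u·α (componentwise) and u·y (componentwise scaling) lie in B. -/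
set_option maxHeartbeats 1000000
open Finset
open scoped ComplexConjugate
set_option linter.unusedSectionVars false

namespace FFVR
variable {F : Type*} [Field F] [Fintype F] [DecidableEq F] {d : ℕ}

def dotp (w v : Fin d → F) : F := ∑ i, w i * v i

lemma dotp_zero_left (v : Fin d → F) : dotp (0 : Fin d → F) v = 0 := by simp [dotp]

lemma dotp_smul (u : F) (w v : Fin d → F) : dotp (u • w) v = u * dotp w v := by
  simp [dotp, Finset.mul_sum, mul_assoc]

lemma dotp_sub (w x y : Fin d → F) : dotp w (x - y) = dotp w x - dotp w y := by
  unfold dotp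
  rw [← Finset.sum_sub_distrib]
  exact Finset.sum_congr rfl fun i _ => by simp [mul_sub]

lemma dotp_phi (u s : F) (α w b : Fin d → F) :
    dotp w (fun i => u * b i - s * α i) = u * dotp w b - s * dotp w α := by
  unfold dotp
  rw [Finset.mul_sum, Finset.mul_sum, ← Finset.sum_sub_distrib]
  exact Finset.sum_congr rfl fun i _ => by ring

variable (ψ : AddChar F ℂ)

lemma psi_map_sum {ι : Type*} (s : Finset ι) (f : ι → F) :
    ψ (∑ i ∈ s, f i) = ∏ i ∈ s, ψ (f i) := by
  classical
  induction s using Finset.cons_induction with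
  | empty => simp
  | cons a s ha ih => rw [Finset.sum_cons, AddChar.map_add_eq_mul, ih, Finset.prod_cons]

lemma conj_psi (a : F) : conj (ψ a) = ψ (-a) := by
  have h : 0 < ringChar F := Nat.pos_of_ne_zero (CharP.ringChar_ne_zero_of_finite F)
  rw [AddChar.starComp_apply h, AddChar.inv_apply]

lemma orth1 (hψ : ψ.IsPrimitive) (a : F) :
    ∑ x : F, ψ (x * a) = if a = 0 then (Fintype.card F : ℂ) else 0 := by
  have := AddChar.sum_mulShift a hψ
  rw [this]; push_cast; rfl

lemma orthV (hψ : ψ.IsPrimitive) (v : Fin d → F) :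
    ∑ w : Fin d → F, ψ (dotp w v) = if v = 0 then ((Fintype.card F : ℂ)) ^ d else 0 := by
  have h1 : ∀ w : Fin d → F, ψ (dotp w v) = ∏ i, ψ (w i * v i) := fun w => psi_map_sum ψ _ _
  have h2 : ∑ w : Fin d → F, ψ (dotp w v) = ∏ i : Fin d, ∑ x : F, ψ (x * v i) := by
    simp_rw [h1]
    rw [← Fintype.piFinset_univ]
    exact (Finset.prod_univ_sum (fun _ => (univ : Finset F)) (fun i x => ψ (x * v i))).symm
  rw [h2]
  by_cases hv : v = 0
  · simp only [hv, if_true]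
    have : ∀ i : Fin d, ∑ x : F, ψ (x * (0:Fin d → F) i) = (Fintype.card F : ℂ) := by
      intro i; simp [orth1 ψ hψ]
    rw [Finset.prod_congr rfl (fun i _ => this i)]
    simp
  · simp only [hv, if_false]
    obtain ⟨i, hi⟩ : ∃ i, v i ≠ 0 := by
      by_contra h; push_neg at h; exact hv (funext h)
    apply Finset.prod_eq_zero (Finset.mem_univ i)
    rw [orth1 ψ hψ, if_neg hi]


variable (B : Finset (Fin d → F))

noncomputable def Sf (w : Fin d → F) : ℂ := ∑ b ∈ B, ψ (dotp w b)

noncomputable def Sbar (w : Fin d → F) : ℂ := ∑ b ∈ B, ψ (-(dotp w b))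

lemma Sbar_eq_conj (w : Fin d → F) : Sbar ψ B w = conj (Sf ψ B w) := by
  unfold Sf Sbar
  rw [map_sum]
  exact Finset.sum_congr rfl fun b _ => (conj_psi ψ _).symm

lemma Sf_zero : Sf ψ B 0 = (B.card : ℂ) := by
  unfold Sf
  rw [Finset.sum_congr rfl fun b _ => by rw [dotp_zero_left b, AddChar.map_zero_eq_one]]
  simp

lemma Sbar_zero : Sbar ψ B 0 = (B.card : ℂ) := by
  rw [Sbar_eq_conj, Sf_zero]; simp

lemma norm_Sbar (w : Fin d → F) : ‖Sbar ψ B w‖ = ‖Sf ψ B w‖ := by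
  rw [Sbar_eq_conj, RCLike.norm_conj]

lemma parseval (hψ : ψ.IsPrimitive) :
    ∑ w : Fin d → F, ‖Sf ψ B w‖ ^ 2 = (Fintype.card F : ℝ) ^ d * B.card := by
  have key : (∑ w : Fin d → F, Sf ψ B w * Sbar ψ B w)
      = ((Fintype.card F : ℂ)) ^ d * B.card := by
    have h1 : ∀ w : Fin d → F, Sf ψ B w * Sbar ψ B w
        = ∑ b ∈ B, ∑ c ∈ B, ψ (dotp w (b - c)) := by
      intro w
      unfold Sf Sbar
      rw [Finset.sum_mul_sum]
      refine Finset.sum_congr rfl fun b _ => Finset.sum_congr rfl fun c _ => ?_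
      rw [← AddChar.map_add_eq_mul, dotp_sub]
      ring_nf
    simp_rw [h1]
    have h3 : ∀ (b c : Fin d → F), ∑ w : Fin d → F, ψ (dotp w (b - c))
        = if b = c then ((Fintype.card F : ℂ)) ^ d else 0 := by
      intro b c
      rw [orthV ψ hψ (b - c)]
      simp only [sub_eq_zero]
    calc ∑ w : Fin d → F, ∑ b ∈ B, ∑ c ∈ B, ψ (dotp w (b - c))
        = ∑ b ∈ B, ∑ w : Fin d → F, ∑ c ∈ B, ψ (dotp w (b - c)) := Finset.sum_comm
      _ = ∑ b ∈ B, ∑ c ∈ B, ∑ w : Fin d → F, ψ (dotp w (b - c)) :=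
          Finset.sum_congr rfl fun b _ => Finset.sum_comm
      _ = ∑ b ∈ B, ∑ c ∈ B, (if b = c then ((Fintype.card F : ℂ)) ^ d else 0) :=
          Finset.sum_congr rfl fun b _ => Finset.sum_congr rfl fun c _ => h3 b c
      _ = ∑ b ∈ B, ((Fintype.card F : ℂ)) ^ d := by
          refine Finset.sum_congr rfl fun b hb => ?_
          rw [Finset.sum_ite_eq B b (fun _ => ((Fintype.card F : ℂ)) ^ d), if_pos hb]
      _ = ((Fintype.card F : ℂ)) ^ d * B.card := by
          rw [Finset.sum_const, nsmul_eq_mul, mul_comm]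
  have h4 : ∀ w : Fin d → F, Sf ψ B w * Sbar ψ B w = ((‖Sf ψ B w‖ ^ 2 : ℝ) : ℂ) := by
    intro w
    rw [Sbar_eq_conj, Complex.mul_conj, Complex.normSq_eq_norm_sq]
  rw [Finset.sum_congr rfl (fun w _ => h4 w)] at key
  rw [← Complex.ofReal_sum] at key
  have h5 : ((Fintype.card F : ℂ)) ^ d * (B.card : ℂ)
      = (((Fintype.card F : ℝ) ^ d * (B.card : ℝ) : ℝ) : ℂ) := by push_cast; ring
  rw [h5] at key
  exact_mod_cast key


variable (α : Fin d → F)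

noncomputable def Tw (w : Fin d → F) : ℂ :=
  ∑ u ∈ univ.erase (0 : F), Sf ψ B (u • w) * ψ (-(u ^ 2 * dotp w α))

noncomputable def Aw (w : Fin d → F) : ℂ :=
  ∑ u ∈ univ.erase (0 : F), Sf ψ B (u • w)

lemma count_identity (hψ : ψ.IsPrimitive) (u s : F) :
    ((Fintype.card F : ℂ)) ^ d * ((B.filter (fun b => (fun i => u * b i - s * α i) ∈ B)).card : ℂ)
      = ∑ w : Fin d → F, Sf ψ B (u • w) * ψ (-(s * dotp w α)) * Sbar ψ B w := by
  have hcard : ((B.filter (fun b => (fun i => u * b i - s * α i) ∈ B)).card : ℂ)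
      = ∑ b ∈ B, ∑ c ∈ B, (if (fun i => u * b i - s * α i) = c then (1:ℂ) else 0) := by
    rw [Finset.card_filter]
    push_cast
    refine Finset.sum_congr rfl fun b _ => ?_
    by_cases hb : (fun i => u * b i - s * α i) ∈ B
    · rw [if_pos hb, Finset.sum_ite_eq B _ (fun _ => (1:ℂ)), if_pos hb]
    · rw [if_neg hb, Finset.sum_ite_eq B _ (fun _ => (1:ℂ)), if_neg hb]
  have key : ∀ (b c : Fin d → F),
      ∑ w : Fin d → F, ψ (dotp (u • w) b) * (ψ (-(s * dotp w α)) * ψ (-(dotp w c)))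
        = if (fun i => u * b i - s * α i) = c then ((Fintype.card F : ℂ)) ^ d else 0 := by
    intro b c
    have h1 : ∀ w : Fin d → F,
        ψ (dotp (u • w) b) * (ψ (-(s * dotp w α)) * ψ (-(dotp w c)))
          = ψ (dotp w ((fun i => u * b i - s * α i) - c)) := by
      intro w
      rw [← AddChar.map_add_eq_mul, ← AddChar.map_add_eq_mul]
      congr 1
      rw [dotp_sub, dotp_phi, dotp_smul]
      ring
    rw [Finset.sum_congr rfl fun w _ => h1 w, orthV ψ hψ]
    simp only [sub_eq_zero]
  calc ((Fintype.card F : ℂ)) ^ d * ((B.filter (fun b => (fun i => u * b i - s * α i) ∈ B)).card : ℂ)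
      = ∑ b ∈ B, ∑ c ∈ B, (if (fun i => u * b i - s * α i) = c then ((Fintype.card F : ℂ)) ^ d else 0) := by
        rw [hcard, Finset.mul_sum]
        refine Finset.sum_congr rfl fun b _ => ?_
        rw [Finset.mul_sum]
        refine Finset.sum_congr rfl fun c _ => ?_
        rw [mul_ite, mul_one, mul_zero]
    _ = ∑ b ∈ B, ∑ c ∈ B, ∑ w : Fin d → F,
          ψ (dotp (u • w) b) * (ψ (-(s * dotp w α)) * ψ (-(dotp w c))) :=
        Finset.sum_congr rfl fun b _ => Finset.sum_congr rfl fun c _ => (key b c).symm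
    _ = ∑ b ∈ B, ∑ w : Fin d → F, ∑ c ∈ B,
          ψ (dotp (u • w) b) * (ψ (-(s * dotp w α)) * ψ (-(dotp w c))) :=
        Finset.sum_congr rfl fun b _ => Finset.sum_comm
    _ = ∑ w : Fin d → F, ∑ b ∈ B, ∑ c ∈ B,
          ψ (dotp (u • w) b) * (ψ (-(s * dotp w α)) * ψ (-(dotp w c))) := Finset.sum_comm
    _ = ∑ w : Fin d → F, Sf ψ B (u • w) * ψ (-(s * dotp w α)) * Sbar ψ B w := by
        refine Finset.sum_congr rfl fun w _ => ?_
        unfold Sf Sbar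
        simp_rw [← mul_assoc, ← Finset.mul_sum]
        rw [← Finset.sum_mul, ← Finset.sum_mul]


lemma smul_ne_zero' {v : F} (hv : v ≠ 0) {w : Fin d → F} (hw : w ≠ 0) : v • w ≠ 0 := by
  intro h
  apply hw
  have : v⁻¹ • (v • w) = v⁻¹ • (0 : Fin d → F) := by rw [h]
  rwa [smul_smul, inv_mul_cancel₀ hv, one_smul, smul_zero] at this

lemma Aw_smul {v : F} (hv : v ≠ 0) (w : Fin d → F) : Aw ψ B (v • w) = Aw ψ B w := by
  unfold Aw
  refine Finset.sum_nbij' (fun u => u * v) (fun u => u * v⁻¹) ?_ ?_ ?_ ?_ ?_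
  · intro a ha
    exact Finset.mem_erase.2 ⟨mul_ne_zero (Finset.mem_erase.1 ha).1 hv, Finset.mem_univ _⟩
  · intro a ha
    exact Finset.mem_erase.2 ⟨mul_ne_zero (Finset.mem_erase.1 ha).1 (inv_ne_zero hv), Finset.mem_univ _⟩
  · intro a _; field_simp
  · intro a _; field_simp
  · intro a _
    rw [smul_smul]

lemma X_re_nonneg (hq : 2 ≤ Fintype.card F) :
    0 ≤ (∑ w ∈ (univ.filter (fun w => dotp w α = 0)).erase 0, Sbar ψ B w * Aw ψ B w).re := by
  classical
  set Hs := (univ.filter (fun w : Fin d → F => dotp w α = 0)).erase 0 with hHs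
  set X := ∑ w ∈ Hs, Sbar ψ B w * Aw ψ B w with hX
  have hmem : ∀ {v : F}, v ≠ 0 → ∀ {w : Fin d → F}, w ∈ Hs → v • w ∈ Hs := by
    intro v hv w hw
    rcases Finset.mem_erase.1 hw with ⟨hw0, hwf⟩
    refine Finset.mem_erase.2 ⟨smul_ne_zero' hv hw0, Finset.mem_filter.2 ⟨Finset.mem_univ _, ?_⟩⟩
    rw [dotp_smul, (Finset.mem_filter.1 hwf).2, mul_zero]
  have step1 : ∀ v ∈ univ.erase (0 : F), X = ∑ w ∈ Hs, Sbar ψ B (v • w) * Aw ψ B w := by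
    intro v hv
    have hv0 : v ≠ 0 := (Finset.mem_erase.1 hv).1
    rw [hX]
    refine Finset.sum_nbij' (fun w => v⁻¹ • w) (fun w => v • w) ?_ ?_ ?_ ?_ ?_
    · intro w hw; exact hmem (inv_ne_zero hv0) hw
    · intro w hw; exact hmem hv0 hw
    · intro w _; rw [smul_smul, mul_inv_cancel₀ hv0, one_smul]
    · intro w _; rw [smul_smul, inv_mul_cancel₀ hv0, one_smul]
    · intro w _
      rw [smul_smul, mul_inv_cancel₀ hv0, one_smul, Aw_smul ψ B (inv_ne_zero hv0)]
  have step2 : ((Fintype.card F - 1 : ℕ) : ℂ) * X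
      = ∑ w ∈ Hs, (Complex.normSq (Aw ψ B w) : ℂ) := by
    have hcard : (univ.erase (0 : F)).card = Fintype.card F - 1 := by
      rw [Finset.card_erase_of_mem (Finset.mem_univ _), Finset.card_univ]
    calc ((Fintype.card F - 1 : ℕ) : ℂ) * X
        = ∑ v ∈ univ.erase (0 : F), X := by
          rw [Finset.sum_const, hcard, nsmul_eq_mul]
      _ = ∑ v ∈ univ.erase (0 : F), ∑ w ∈ Hs, Sbar ψ B (v • w) * Aw ψ B w :=
          Finset.sum_congr rfl step1
      _ = ∑ w ∈ Hs, ∑ v ∈ univ.erase (0 : F), Sbar ψ B (v • w) * Aw ψ B w := Finset.sum_comm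
      _ = ∑ w ∈ Hs, (Complex.normSq (Aw ψ B w) : ℂ) := by
          refine Finset.sum_congr rfl fun w _ => ?_
          rw [← Finset.sum_mul]
          have : ∑ v ∈ univ.erase (0 : F), Sbar ψ B (v • w) = conj (Aw ψ B w) := by
            unfold Aw
            rw [map_sum]
            exact Finset.sum_congr rfl fun v _ => Sbar_eq_conj ψ B (v • w)
          rw [this, mul_comm, Complex.mul_conj]
  have h1 : ((Fintype.card F - 1 : ℕ) : ℝ) * X.re
      = ∑ w ∈ Hs, Complex.normSq (Aw ψ B w) := by
    have := congrArg Complex.re step2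
    simpa using this
  have h2 : 0 ≤ ∑ w ∈ Hs, Complex.normSq (Aw ψ B w) :=
    Finset.sum_nonneg fun w _ => Complex.normSq_nonneg _
  have h3 : (0:ℝ) < ((Fintype.card F - 1 : ℕ) : ℝ) := by
    have : 1 ≤ Fintype.card F - 1 := by omega
    exact_mod_cast Nat.lt_of_lt_of_le Nat.zero_lt_one this
  nlinarith [h1, h2, h3]


lemma slice_partition (f : (Fin d → F) → ℝ) :
    ∑ w ∈ univ.filter (fun w => dotp w α ≠ 0), f w
      = ∑ w₀ ∈ univ.filter (fun w => dotp w α = 1), ∑ t ∈ univ.erase (0 : F), f (t • w₀) := by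
  classical
  rw [← Finset.sum_product']
  refine Finset.sum_nbij' (fun w => ((dotp w α)⁻¹ • w, dotp w α)) (fun p => p.2 • p.1)
    ?_ ?_ ?_ ?_ ?_
  · intro w hw
    have hw0 : dotp w α ≠ 0 := (Finset.mem_filter.1 hw).2
    refine Finset.mem_product.2 ⟨Finset.mem_filter.2 ⟨Finset.mem_univ _, ?_⟩,
      Finset.mem_erase.2 ⟨hw0, Finset.mem_univ _⟩⟩
    rw [dotp_smul, inv_mul_cancel₀ hw0]
  · intro p hp
    rcases Finset.mem_product.1 hp with ⟨h1, h2⟩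
    have h1' : dotp p.1 α = 1 := (Finset.mem_filter.1 h1).2
    have h2' : p.2 ≠ 0 := (Finset.mem_erase.1 h2).1
    refine Finset.mem_filter.2 ⟨Finset.mem_univ _, ?_⟩
    rw [dotp_smul, h1', mul_one]
    exact h2'
  · intro w hw
    have hw0 : dotp w α ≠ 0 := (Finset.mem_filter.1 hw).2
    dsimp only
    rw [smul_smul, mul_inv_cancel₀ hw0, one_smul]
  · intro p hp
    rcases Finset.mem_product.1 hp with ⟨h1, h2⟩
    have h1' : dotp p.1 α = 1 := (Finset.mem_filter.1 h1).2
    have h2' : p.2 ≠ 0 := (Finset.mem_erase.1 h2).1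
    have hσ : dotp (p.2 • p.1) α = p.2 := by rw [dotp_smul, h1', mul_one]
    rw [hσ]
    exact Prod.ext (by rw [smul_smul, inv_mul_cancel₀ h2', one_smul]) rfl
  · intro w hw
    have hw0 : dotp w α ≠ 0 := (Finset.mem_filter.1 hw).2
    dsimp only
    rw [smul_smul, mul_inv_cancel₀ hw0, one_smul]

lemma pair_sum_le (f : F → ℝ) (hf : ∀ x, 0 ≤ f x) (r : F) :
    ∑ x ∈ ({r, -r} : Finset F), f x ≤ f r + f (-r) := by
  by_cases h : r = -r
  · have hs : ({r, -r} : Finset F) = {r} := by rw [← h]; simp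
    rw [hs, Finset.sum_singleton]
    have := hf (-r); linarith
  · rw [Finset.sum_pair h]

lemma neg_reindex (f : F → ℝ) :
    ∑ r ∈ univ.erase (0 : F), f (-r) = ∑ r ∈ univ.erase (0 : F), f r := by
  refine Finset.sum_nbij' (fun r => -r) (fun r => -r) ?_ ?_ ?_ ?_ ?_
  · intro a ha; exact Finset.mem_erase.2 ⟨neg_ne_zero.2 (Finset.mem_erase.1 ha).1, Finset.mem_univ _⟩
  · intro a ha; exact Finset.mem_erase.2 ⟨neg_ne_zero.2 (Finset.mem_erase.1 ha).1, Finset.mem_univ _⟩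
  · intro a _; simp
  · intro a _; simp
  · intro a _; simp

lemma line_bound (hψ : ψ.IsPrimitive) (w₀ : Fin d → F) (hw₀ : dotp w₀ α = 1) :
    ∑ t ∈ univ.erase (0 : F), ‖Tw ψ B α (t • w₀)‖ ^ 2
      ≤ 2 * (Fintype.card F : ℝ) * ∑ r ∈ univ.erase (0 : F), ‖Sf ψ B (r • w₀)‖ ^ 2 := by
  classical
  set g : F → ℂ := fun τ => ∑ r ∈ univ.erase (0 : F), Sf ψ B (r • w₀) * ψ (-(r ^ 2 * τ)) with hg
  have ha : ∀ t : F, t ≠ 0 → Tw ψ B α (t • w₀) = g t⁻¹ := by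
    intro t ht
    unfold Tw
    rw [hg]
    refine Finset.sum_nbij' (fun u => u * t) (fun r => r * t⁻¹) ?_ ?_ ?_ ?_ ?_
    · intro a ha
      exact Finset.mem_erase.2 ⟨mul_ne_zero (Finset.mem_erase.1 ha).1 ht, Finset.mem_univ _⟩
    · intro a ha
      exact Finset.mem_erase.2
        ⟨mul_ne_zero (Finset.mem_erase.1 ha).1 (inv_ne_zero ht), Finset.mem_univ _⟩
    · intro a _; field_simp
    · intro a _; field_simp
    · intro u hu
      rw [smul_smul]
      congr 2
      rw [dotp_smul, hw₀, mul_one]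
      field_simp
  have hb : ∑ t ∈ univ.erase (0 : F), ‖Tw ψ B α (t • w₀)‖ ^ 2
      ≤ ∑ τ : F, ‖g τ‖ ^ 2 := by
    have e1 : ∑ t ∈ univ.erase (0 : F), ‖Tw ψ B α (t • w₀)‖ ^ 2
        = ∑ t ∈ univ.erase (0 : F), ‖g t⁻¹‖ ^ 2 := by
      refine Finset.sum_congr rfl fun t ht => ?_
      rw [ha t (Finset.mem_erase.1 ht).1]
    have e2 : ∑ t ∈ univ.erase (0 : F), ‖g t⁻¹‖ ^ 2
        = ∑ τ ∈ univ.erase (0 : F), ‖g τ‖ ^ 2 := by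
      refine Finset.sum_nbij' (fun t => t⁻¹) (fun t => t⁻¹) ?_ ?_ ?_ ?_ ?_
      · intro a ha
        exact Finset.mem_erase.2 ⟨inv_ne_zero (Finset.mem_erase.1 ha).1, Finset.mem_univ _⟩
      · intro a ha
        exact Finset.mem_erase.2 ⟨inv_ne_zero (Finset.mem_erase.1 ha).1, Finset.mem_univ _⟩
      · intro a _; simp
      · intro a _; simp
      · intro a _; rfl
    rw [e1, e2]
    exact Finset.sum_le_sum_of_subset_of_nonneg (Finset.subset_univ _)
      (fun τ _ _ => sq_nonneg _)
  -- complex Parseval for g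
  have hc : (∑ τ : F, g τ * conj (g τ))
      = (Fintype.card F : ℂ) * ∑ r ∈ univ.erase (0 : F),
          ∑ r' ∈ (univ.erase (0 : F)).filter (fun r' => r' ^ 2 = r ^ 2),
            Sf ψ B (r • w₀) * conj (Sf ψ B (r' • w₀)) := by
    have e1 : ∀ τ : F, g τ * conj (g τ)
        = ∑ r ∈ univ.erase (0 : F), ∑ r' ∈ univ.erase (0 : F),
            Sf ψ B (r • w₀) * conj (Sf ψ B (r' • w₀)) * ψ (τ * (r' ^ 2 - r ^ 2)) := by
      intro τ
      rw [hg]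
      dsimp only
      rw [map_sum, Finset.sum_mul_sum]
      refine Finset.sum_congr rfl fun r _ => Finset.sum_congr rfl fun r' _ => ?_
      rw [map_mul, conj_psi ψ, neg_neg]
      have : ψ (-(r ^ 2 * τ)) * ψ (r' ^ 2 * τ) = ψ (τ * (r' ^ 2 - r ^ 2)) := by
        rw [← AddChar.map_add_eq_mul]
        congr 1
        ring
      calc Sf ψ B (r • w₀) * ψ (-(r ^ 2 * τ)) * (conj (Sf ψ B (r' • w₀)) * ψ (r' ^ 2 * τ))
          = Sf ψ B (r • w₀) * conj (Sf ψ B (r' • w₀)) * (ψ (-(r ^ 2 * τ)) * ψ (r' ^ 2 * τ)) := by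
            ring
        _ = _ := by rw [this]
    calc ∑ τ : F, g τ * conj (g τ)
        = ∑ τ : F, ∑ r ∈ univ.erase (0 : F), ∑ r' ∈ univ.erase (0 : F),
            Sf ψ B (r • w₀) * conj (Sf ψ B (r' • w₀)) * ψ (τ * (r' ^ 2 - r ^ 2)) :=
          Finset.sum_congr rfl fun τ _ => e1 τ
      _ = ∑ r ∈ univ.erase (0 : F), ∑ τ : F, ∑ r' ∈ univ.erase (0 : F),
            Sf ψ B (r • w₀) * conj (Sf ψ B (r' • w₀)) * ψ (τ * (r' ^ 2 - r ^ 2)) :=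
          Finset.sum_comm
      _ = ∑ r ∈ univ.erase (0 : F), ∑ r' ∈ univ.erase (0 : F), ∑ τ : F,
            Sf ψ B (r • w₀) * conj (Sf ψ B (r' • w₀)) * ψ (τ * (r' ^ 2 - r ^ 2)) :=
          Finset.sum_congr rfl fun r _ => Finset.sum_comm
      _ = ∑ r ∈ univ.erase (0 : F), ∑ r' ∈ univ.erase (0 : F),
            (if r' ^ 2 = r ^ 2 then (Fintype.card F : ℂ) * (Sf ψ B (r • w₀) * conj (Sf ψ B (r' • w₀))) else 0) := by
          refine Finset.sum_congr rfl fun r _ => Finset.sum_congr rfl fun r' _ => ?_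
          rw [← Finset.mul_sum, orth1 ψ hψ (r' ^ 2 - r ^ 2)]
          simp only [sub_eq_zero]
          by_cases h : r' ^ 2 = r ^ 2
          · rw [if_pos h, if_pos h]; ring
          · rw [if_neg h, if_neg h, mul_zero]
      _ = ∑ r ∈ univ.erase (0 : F),
            ∑ r' ∈ (univ.erase (0 : F)).filter (fun r' => r' ^ 2 = r ^ 2),
              (Fintype.card F : ℂ) * (Sf ψ B (r • w₀) * conj (Sf ψ B (r' • w₀))) := by
          refine Finset.sum_congr rfl fun r _ => ?_
          rw [Finset.sum_filter]
      _ = _ := by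
          rw [Finset.mul_sum]
          refine Finset.sum_congr rfl fun r _ => ?_
          rw [Finset.mul_sum]
  -- real bound from hc
  have hre : (∑ τ : F, ‖g τ‖ ^ 2 : ℝ)
      = (∑ τ : F, g τ * conj (g τ)).re := by
    rw [Complex.re_sum]
    refine Finset.sum_congr rfl fun τ _ => ?_
    rw [Complex.mul_conj, Complex.ofReal_re, Complex.normSq_eq_norm_sq]
  have habs : (∑ τ : F, ‖g τ‖ ^ 2 : ℝ)
      ≤ (Fintype.card F : ℝ) * ∑ r ∈ univ.erase (0 : F),
          ∑ r' ∈ (univ.erase (0 : F)).filter (fun r' => r' ^ 2 = r ^ 2),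
            ‖Sf ψ B (r • w₀)‖ * ‖Sf ψ B (r' • w₀)‖ := by
    rw [hre, hc]
    calc ((Fintype.card F : ℂ) * ∑ r ∈ univ.erase (0 : F),
          ∑ r' ∈ (univ.erase (0 : F)).filter (fun r' => r' ^ 2 = r ^ 2),
            Sf ψ B (r • w₀) * conj (Sf ψ B (r' • w₀))).re
        ≤ ‖(Fintype.card F : ℂ) * ∑ r ∈ univ.erase (0 : F),
            ∑ r' ∈ (univ.erase (0 : F)).filter (fun r' => r' ^ 2 = r ^ 2),
              Sf ψ B (r • w₀) * conj (Sf ψ B (r' • w₀))‖ := Complex.re_le_norm _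
      _ ≤ (Fintype.card F : ℝ) * ∑ r ∈ univ.erase (0 : F),
          ∑ r' ∈ (univ.erase (0 : F)).filter (fun r' => r' ^ 2 = r ^ 2),
            ‖Sf ψ B (r • w₀)‖ * ‖Sf ψ B (r' • w₀)‖ := by
          rw [norm_mul, Complex.norm_natCast]
          refine mul_le_mul_of_nonneg_left ?_ (Nat.cast_nonneg _)
          refine le_trans (norm_sum_le _ _) (Finset.sum_le_sum fun r _ => ?_)
          refine le_trans (norm_sum_le _ _) (Finset.sum_le_sum fun r' _ => ?_)
          rw [norm_mul, RCLike.norm_conj]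
  have hpair : ∀ r : F, r ∈ univ.erase (0 : F) →
      ∑ r' ∈ (univ.erase (0 : F)).filter (fun r' => r' ^ 2 = r ^ 2),
          ‖Sf ψ B (r • w₀)‖ * ‖Sf ψ B (r' • w₀)‖
        ≤ ‖Sf ψ B (r • w₀)‖ ^ 2
          + (‖Sf ψ B (r • w₀)‖ ^ 2 + ‖Sf ψ B ((-r) • w₀)‖ ^ 2) / 2 := by
    intro r _
    have hsub : (univ.erase (0 : F)).filter (fun r' => r' ^ 2 = r ^ 2) ⊆ ({r, -r} : Finset F) := by
      intro x hx
      rcases Finset.mem_filter.1 hx with ⟨_, hx2⟩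
      rcases sq_eq_sq_iff_eq_or_eq_neg.1 hx2 with h | h
      · exact Finset.mem_insert.2 (Or.inl h)
      · exact Finset.mem_insert.2 (Or.inr (Finset.mem_singleton.2 h))
    calc ∑ r' ∈ (univ.erase (0 : F)).filter (fun r' => r' ^ 2 = r ^ 2),
          ‖Sf ψ B (r • w₀)‖ * ‖Sf ψ B (r' • w₀)‖
        ≤ ∑ r' ∈ ({r, -r} : Finset F), ‖Sf ψ B (r • w₀)‖ * ‖Sf ψ B (r' • w₀)‖ :=
          Finset.sum_le_sum_of_subset_of_nonneg hsub
            (fun x _ _ => mul_nonneg (norm_nonneg _) (norm_nonneg _))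
      _ ≤ ‖Sf ψ B (r • w₀)‖ * ‖Sf ψ B (r • w₀)‖
            + ‖Sf ψ B (r • w₀)‖ * ‖Sf ψ B ((-r) • w₀)‖ :=
          pair_sum_le (fun x => ‖Sf ψ B (r • w₀)‖ * ‖Sf ψ B (x • w₀)‖)
            (fun x => mul_nonneg (norm_nonneg _) (norm_nonneg _)) r
      _ ≤ ‖Sf ψ B (r • w₀)‖ ^ 2
            + (‖Sf ψ B (r • w₀)‖ ^ 2 + ‖Sf ψ B ((-r) • w₀)‖ ^ 2) / 2 := by
          nlinarith [sq_nonneg (‖Sf ψ B (r • w₀)‖ - ‖Sf ψ B ((-r) • w₀)‖)]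
  have hsum2 : ∑ r ∈ univ.erase (0 : F),
      (‖Sf ψ B (r • w₀)‖ ^ 2 + (‖Sf ψ B (r • w₀)‖ ^ 2 + ‖Sf ψ B ((-r) • w₀)‖ ^ 2) / 2)
        = 2 * ∑ r ∈ univ.erase (0 : F), ‖Sf ψ B (r • w₀)‖ ^ 2 := by
    rw [Finset.sum_add_distrib]
    have : ∑ r ∈ univ.erase (0 : F),
        (‖Sf ψ B (r • w₀)‖ ^ 2 + ‖Sf ψ B ((-r) • w₀)‖ ^ 2) / 2
        = (∑ r ∈ univ.erase (0 : F), ‖Sf ψ B (r • w₀)‖ ^ 2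
          + ∑ r ∈ univ.erase (0 : F), ‖Sf ψ B ((-r) • w₀)‖ ^ 2) / 2 := by
      rw [← Finset.sum_add_distrib, ← Finset.sum_div]
    rw [this, neg_reindex (fun x => ‖Sf ψ B (x • w₀)‖ ^ 2)]
    ring
  calc ∑ t ∈ univ.erase (0 : F), ‖Tw ψ B α (t • w₀)‖ ^ 2
      ≤ ∑ τ : F, ‖g τ‖ ^ 2 := hb
    _ ≤ (Fintype.card F : ℝ) * ∑ r ∈ univ.erase (0 : F),
          ∑ r' ∈ (univ.erase (0 : F)).filter (fun r' => r' ^ 2 = r ^ 2),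
            ‖Sf ψ B (r • w₀)‖ * ‖Sf ψ B (r' • w₀)‖ := habs
    _ ≤ (Fintype.card F : ℝ) * ∑ r ∈ univ.erase (0 : F),
          (‖Sf ψ B (r • w₀)‖ ^ 2 + (‖Sf ψ B (r • w₀)‖ ^ 2 + ‖Sf ψ B ((-r) • w₀)‖ ^ 2) / 2) :=
        mul_le_mul_of_nonneg_left (Finset.sum_le_sum hpair) (Nat.cast_nonneg _)
    _ = 2 * (Fintype.card F : ℝ) * ∑ r ∈ univ.erase (0 : F), ‖Sf ψ B (r • w₀)‖ ^ 2 := by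
        rw [hsum2]; ring


lemma P1_le (hψ : ψ.IsPrimitive) :
    ∑ w ∈ univ.filter (fun w => dotp w α ≠ 0), ‖Sf ψ B w‖ ^ 2
      ≤ (Fintype.card F : ℝ) ^ d * B.card := by
  rw [← parseval ψ B hψ]
  exact Finset.sum_le_sum_of_subset_of_nonneg (Finset.filter_subset _ _)
    (fun w _ _ => sq_nonneg _)

lemma P2_le (hψ : ψ.IsPrimitive) :
    ∑ w ∈ univ.filter (fun w => dotp w α ≠ 0), ‖Tw ψ B α w‖ ^ 2
      ≤ 2 * (Fintype.card F : ℝ) * ∑ w ∈ univ.filter (fun w => dotp w α ≠ 0), ‖Sf ψ B w‖ ^ 2 := by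
  rw [slice_partition α (fun w => ‖Tw ψ B α w‖ ^ 2),
    slice_partition α (fun w => ‖Sf ψ B w‖ ^ 2), Finset.mul_sum]
  exact Finset.sum_le_sum fun w₀ hw₀ =>
    line_bound ψ B α hψ w₀ (Finset.mem_filter.1 hw₀).2

lemma E_bound (hψ : ψ.IsPrimitive) :
    ‖∑ w ∈ univ.filter (fun w => dotp w α ≠ 0), Sbar ψ B w * Tw ψ B α w‖
      ≤ Real.sqrt (2 * (Fintype.card F : ℝ)) * ((Fintype.card F : ℝ) ^ d * B.card) := by
  classical
  set s := univ.filter (fun w : Fin d → F => dotp w α ≠ 0) with hs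
  set P1 := ∑ w ∈ s, ‖Sf ψ B w‖ ^ 2 with hP1
  have hP1nn : 0 ≤ P1 := Finset.sum_nonneg fun w _ => sq_nonneg _
  have h0 : ‖∑ w ∈ s, Sbar ψ B w * Tw ψ B α w‖ ≤ ∑ w ∈ s, ‖Sf ψ B w‖ * ‖Tw ψ B α w‖ := by
    refine le_trans (norm_sum_le _ _) (Finset.sum_le_sum fun w _ => ?_)
    rw [norm_mul, norm_Sbar]
  have hcs : (∑ w ∈ s, ‖Sf ψ B w‖ * ‖Tw ψ B α w‖) ^ 2
      ≤ P1 * ∑ w ∈ s, ‖Tw ψ B α w‖ ^ 2 :=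
    Finset.sum_mul_sq_le_sq_mul_sq s _ _
  have h2 : ‖∑ w ∈ s, Sbar ψ B w * Tw ψ B α w‖ ^ 2
      ≤ 2 * (Fintype.card F : ℝ) * P1 ^ 2 := by
    have h3 := P2_le ψ B α hψ
    have h4 : (∑ w ∈ s, ‖Sf ψ B w‖ * ‖Tw ψ B α w‖) ^ 2
        ≤ P1 * (2 * (Fintype.card F : ℝ) * P1) :=
      le_trans hcs (mul_le_mul_of_nonneg_left h3 hP1nn)
    have h5 : ‖∑ w ∈ s, Sbar ψ B w * Tw ψ B α w‖ ^ 2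
        ≤ (∑ w ∈ s, ‖Sf ψ B w‖ * ‖Tw ψ B α w‖) ^ 2 := by
      have hnn : 0 ≤ ∑ w ∈ s, ‖Sf ψ B w‖ * ‖Tw ψ B α w‖ :=
        Finset.sum_nonneg fun w _ => mul_nonneg (norm_nonneg _) (norm_nonneg _)
      exact pow_le_pow_left₀ (norm_nonneg _) h0 2
    nlinarith [h4, h5]
  have h6 : ‖∑ w ∈ s, Sbar ψ B w * Tw ψ B α w‖
      ≤ Real.sqrt (2 * (Fintype.card F : ℝ)) * P1 := by
    have := Real.sqrt_le_sqrt h2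
    rw [Real.sqrt_sq (norm_nonneg _)] at this
    · calc ‖∑ w ∈ s, Sbar ψ B w * Tw ψ B α w‖
          ≤ Real.sqrt (2 * (Fintype.card F : ℝ) * P1 ^ 2) := this
        _ = Real.sqrt (2 * (Fintype.card F : ℝ)) * P1 := by
            rw [Real.sqrt_mul (by positivity), Real.sqrt_sq hP1nn]
  exact le_trans h6 (mul_le_mul_of_nonneg_left (hP1 ▸ P1_le ψ B α hψ) (Real.sqrt_nonneg _))

def Nsol : ℕ :=
  ∑ u ∈ univ.erase (0 : F), (B.filter (fun b => (fun i => u * b i - u ^ 2 * α i) ∈ B)).card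

lemma master (hψ : ψ.IsPrimitive) :
    ((Fintype.card F : ℂ)) ^ d * (Nsol B α : ℂ)
      = ∑ w : Fin d → F, Sbar ψ B w * Tw ψ B α w := by
  unfold Nsol
  push_cast
  rw [Finset.mul_sum]
  calc ∑ u ∈ univ.erase (0 : F), ((Fintype.card F : ℂ)) ^ d *
        ((B.filter (fun b => (fun i => u * b i - u ^ 2 * α i) ∈ B)).card : ℂ)
      = ∑ u ∈ univ.erase (0 : F), ∑ w : Fin d → F,
          Sf ψ B (u • w) * ψ (-(u ^ 2 * dotp w α)) * Sbar ψ B w :=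
        Finset.sum_congr rfl fun u _ => count_identity ψ B α hψ u (u ^ 2)
    _ = ∑ w : Fin d → F, ∑ u ∈ univ.erase (0 : F),
          Sf ψ B (u • w) * ψ (-(u ^ 2 * dotp w α)) * Sbar ψ B w := Finset.sum_comm
    _ = ∑ w : Fin d → F, Sbar ψ B w * Tw ψ B α w := by
        refine Finset.sum_congr rfl fun w _ => ?_
        unfold Tw
        rw [Finset.mul_sum]
        exact Finset.sum_congr rfl fun u _ => by ring


lemma re_lower (hψ : ψ.IsPrimitive) (hq : 2 ≤ Fintype.card F) :
    ((Fintype.card F - 1 : ℕ) : ℝ) * (B.card : ℝ) ^ 2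
      - Real.sqrt (2 * (Fintype.card F : ℝ)) * ((Fintype.card F : ℝ) ^ d * B.card)
    ≤ (Fintype.card F : ℝ) ^ d * (Nsol B α : ℝ) := by
  classical
  set E := ∑ w ∈ univ.filter (fun w => dotp w α ≠ 0), Sbar ψ B w * Tw ψ B α w with hE
  set X := ∑ w ∈ (univ.filter (fun w : Fin d → F => dotp w α = 0)).erase 0,
    Sbar ψ B w * Aw ψ B w with hXdef
  set C : ℝ := ((Fintype.card F - 1 : ℕ) : ℝ) * (B.card : ℝ) ^ 2 with hC
  have hsplit : ((Fintype.card F : ℂ)) ^ d * (Nsol B α : ℂ) = ((C : ℝ) : ℂ) + X + E := by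
    rw [master ψ B α hψ, ← Finset.sum_filter_add_sum_filter_not univ (fun w => dotp w α = 0)]
    have hfe : univ.filter (fun w : Fin d → F => ¬ dotp w α = 0)
        = univ.filter (fun w : Fin d → F => dotp w α ≠ 0) := rfl
    rw [hfe, ← hE]
    have hHpart : ∑ w ∈ univ.filter (fun w : Fin d → F => dotp w α = 0),
        Sbar ψ B w * Tw ψ B α w = X + ((C : ℝ) : ℂ) := by
      have hTA : ∀ w ∈ univ.filter (fun w : Fin d → F => dotp w α = 0),
          Sbar ψ B w * Tw ψ B α w = Sbar ψ B w * Aw ψ B w := by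
        intro w hw
        have hσ : dotp w α = 0 := (Finset.mem_filter.1 hw).2
        unfold Tw Aw
        congr 1
        refine Finset.sum_congr rfl fun u _ => ?_
        rw [hσ, mul_zero, neg_zero, AddChar.map_zero_eq_one, mul_one]
      rw [Finset.sum_congr rfl hTA]
      have h0mem : (0 : Fin d → F) ∈ univ.filter (fun w : Fin d → F => dotp w α = 0) :=
        Finset.mem_filter.2 ⟨Finset.mem_univ _, dotp_zero_left α⟩
      rw [← Finset.sum_erase_add _ _ h0mem, ← hXdef]
      congr 1
      have hAw0 : Aw ψ B 0 = ((Fintype.card F - 1 : ℕ) : ℂ) * (B.card : ℂ) := by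
        unfold Aw
        have : ∀ u ∈ univ.erase (0 : F), Sf ψ B (u • (0 : Fin d → F)) = (B.card : ℂ) := by
          intro u _; rw [smul_zero, Sf_zero]
        rw [Finset.sum_congr rfl this, Finset.sum_const,
          Finset.card_erase_of_mem (Finset.mem_univ _), Finset.card_univ, nsmul_eq_mul]
      rw [Sbar_zero, hAw0, hC]
      push_cast
      ring
    rw [hHpart]
    ring
  have hre := congrArg Complex.re hsplit
  have hl : (((Fintype.card F : ℂ)) ^ d * (Nsol B α : ℂ)).re
      = (Fintype.card F : ℝ) ^ d * (Nsol B α : ℝ) := by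
    have : ((Fintype.card F : ℂ)) ^ d * (Nsol B α : ℂ)
        = (((Fintype.card F : ℝ) ^ d * (Nsol B α : ℝ) : ℝ) : ℂ) := by push_cast; ring
    rw [this, Complex.ofReal_re]
  rw [hl] at hre
  have hrr : (((C : ℝ) : ℂ) + X + E).re = C + X.re + E.re := by
    simp [Complex.add_re, Complex.ofReal_re]
  rw [hrr] at hre
  have hXnn : 0 ≤ X.re := X_re_nonneg ψ B α hq
  have hEre : -(Real.sqrt (2 * (Fintype.card F : ℝ)) * ((Fintype.card F : ℝ) ^ d * B.card))
      ≤ E.re := by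
    have h1 : |E.re| ≤ ‖E‖ := Complex.abs_re_le_norm E
    have h2 := E_bound ψ B α hψ
    rw [← hE] at h2
    have := neg_abs_le E.re
    linarith
  linarith


end FFVR

/-- For a finite field `F`, `d ∈ ℕ`, any `B ⊆ F^d` with `|B| > √6 · |F|^(d - 1/2)` and any
`α ∈ (F*)^d`, there exist `y ∈ F^d` and `u ∈ F*` such that `y + u·α` and `u·y`
(componentwise) both lie in `B`. -/
theorem finite_field_vector_recurrence {F : Type*} [Field F] [Fintype F] [DecidableEq F]
    (d : ℕ) (B : Finset (Fin d → F))
    (hB : Real.sqrt 6 * (Fintype.card F : ℝ) ^ ((d : ℝ) - 1 / 2) < (B.card : ℝ))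
    (α : Fin d → F) (hα : ∀ i, α i ≠ 0) :
    ∃ (y : Fin d → F) (u : F), u ≠ 0 ∧
      (fun i => y i + u * α i) ∈ B ∧ (fun i => u * y i) ∈ B := by
  classical
  set ψ : AddChar F ℂ := AddChar.FiniteField.primitiveChar_to_Complex F with hψdef
  have hψ : ψ.IsPrimitive := AddChar.FiniteField.primitiveChar_to_Complex_isPrimitive F
  set q : ℕ := Fintype.card F with hqdef
  have hq2 : 2 ≤ q := Fintype.one_lt_card
  have hQpos : (0:ℝ) < (q:ℝ) := by positivity
  have hbpos : (0:ℝ) < (B.card : ℝ) := lt_of_le_of_lt (by positivity) hB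
  have hble : (B.card : ℝ) ≤ (q:ℝ) ^ d := by
    have h := Finset.card_le_univ B
    have h2 : Fintype.card (Fin d → F) = q ^ d := by
      rw [Fintype.card_fun, Fintype.card_fin]
    calc (B.card : ℝ) ≤ (Fintype.card (Fin d → F) : ℝ) := Nat.cast_le.2 h
      _ = (q:ℝ) ^ d := by rw [h2]; push_cast; rfl
  have hkey : ((q:ℝ)) ^ ((d:ℝ) - 1/2) * Real.sqrt (q:ℝ) = (q:ℝ) ^ d := by
    rw [Real.sqrt_eq_rpow, ← Real.rpow_add hQpos]
    norm_num
  have h6 : Real.sqrt 6 < Real.sqrt (q:ℝ) := by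
    have hP : 0 < (q:ℝ) ^ ((d:ℝ) - 1/2) := Real.rpow_pos_of_pos hQpos _
    nlinarith [Real.sqrt_nonneg (6:ℝ), Real.sqrt_nonneg ((q:ℝ)), hB, hble, hkey, hP]
  have hq6 : (6:ℝ) < (q:ℝ) := by
    nlinarith [Real.sq_sqrt (show (0:ℝ) ≤ 6 by norm_num), Real.sq_sqrt (le_of_lt hQpos),
      Real.sqrt_nonneg (6:ℝ), Real.sqrt_nonneg ((q:ℝ)), h6]
  have hq7 : (7:ℝ) ≤ (q:ℝ) := by
    have h1 : (6:ℕ) < q := by exact_mod_cast hq6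
    have h2 : (7:ℕ) ≤ q := h1
    exact_mod_cast h2
  have hmain : Real.sqrt (2 * (q:ℝ)) * ((q:ℝ) ^ d * B.card)
      < ((q - 1 : ℕ) : ℝ) * (B.card : ℝ) ^ 2 := by
    set b : ℝ := (B.card : ℝ) with hbdef
    set Q : ℝ := (q:ℝ) with hQdef
    set sQ : ℝ := Real.sqrt Q with hsQdef
    set s2 : ℝ := Real.sqrt 2 with hs2def
    set s3 : ℝ := Real.sqrt 3 with hs3def
    have hcast : ((q - 1 : ℕ) : ℝ) = Q - 1 := by
      rw [Nat.cast_sub (by omega)]; norm_num; rfl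
    have h2q : Real.sqrt (2 * Q) = s2 * sQ := Real.sqrt_mul (by norm_num) Q
    have h6' : Real.sqrt 6 = s2 * s3 := by
      rw [show (6:ℝ) = 2 * 3 by norm_num, Real.sqrt_mul (by norm_num)]
    have hs3 : (7/6 : ℝ) ≤ s3 := by
      nlinarith [Real.sq_sqrt (show (0:ℝ) ≤ 3 by norm_num), Real.sqrt_nonneg (3:ℝ)]
    have hs2pos : (0:ℝ) < s2 := Real.sqrt_pos.2 (by norm_num)
    have hsQpos : (0:ℝ) < sQ := Real.sqrt_pos.2 hQpos
    have hsQsq : sQ * sQ = Q := Real.mul_self_sqrt (le_of_lt hQpos)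
    have hQdpos : (0:ℝ) < Q ^ d := by positivity
    have hbsQ : s2 * s3 * Q ^ d < b * sQ := by
      have h1 := mul_lt_mul_of_pos_right hB hsQpos
      rw [mul_assoc] at h1
      rw [hkey] at h1
      rw [h6'] at h1
      exact h1
    have hQle : Q ≤ (Q - 1) * s3 := by nlinarith [hs3, hq7]
    have step1 : (Q - 1) * b * (s2 * s3 * Q ^ d) < (Q - 1) * b * (b * sQ) := by
      have hpos : (0:ℝ) < (Q - 1) * b := by nlinarith [hbpos, hq7]
      exact mul_lt_mul_of_pos_left hbsQ hpos
    have step2 : s2 * Q * (Q ^ d * b) ≤ (Q - 1) * b * (s2 * s3 * Q ^ d) := by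
      have h1 : s2 * Q ^ d * b * Q ≤ s2 * Q ^ d * b * ((Q - 1) * s3) := by
        refine mul_le_mul_of_nonneg_left hQle ?_
        positivity
      nlinarith [h1]
    rw [hcast, h2q]
    by_contra hcon
    push_neg at hcon
    have h3 : (Q - 1) * b ^ 2 * sQ ≤ s2 * sQ * (Q ^ d * b) * sQ :=
      mul_le_mul_of_nonneg_right hcon (le_of_lt hsQpos)
    have h4 : s2 * sQ * (Q ^ d * b) * sQ = s2 * Q * (Q ^ d * b) := by
      rw [← hsQsq]; ring
    rw [h4] at h3
    have h5 : (Q - 1) * b * (b * sQ) = (Q - 1) * b ^ 2 * sQ := by ring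
    linarith [step1, step2, h3, h5]
  have hNne : FFVR.Nsol B α ≠ 0 := by
    intro h0
    have hlow := FFVR.re_lower ψ B α hψ hq2
    rw [h0] at hlow
    simp only [Nat.cast_zero, mul_zero] at hlow
    rw [← hqdef] at hlow
    nlinarith [hmain, hlow]
  have : ∃ u ∈ univ.erase (0 : F),
      (B.filter (fun b => (fun i => u * b i - u ^ 2 * α i) ∈ B)).card ≠ 0 := by
    by_contra hcon
    push_neg at hcon
    apply hNne
    unfold FFVR.Nsol
    exact Finset.sum_eq_zero hcon
  obtain ⟨u, hu, hcard⟩ := this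
  have hne : (B.filter (fun b => (fun i => u * b i - u ^ 2 * α i) ∈ B)).Nonempty :=
    Finset.card_pos.1 (Nat.pos_of_ne_zero hcard)
  obtain ⟨b, hb⟩ := hne
  rcases Finset.mem_filter.1 hb with ⟨hbB, hbP⟩
  refine ⟨fun i => b i - u * α i, u, (Finset.mem_erase.1 hu).1, ?_, ?_⟩
  · show (fun i => (b i - u * α i) + u * α i) ∈ B
    have h1 : (fun i => (b i - u * α i) + u * α i) = b := funext fun i => by ring
    rw [h1]
    exact hbB
  · show (fun i => u * (b i - u * α i)) ∈ B
    have h2 : (fun i => u * (b i - u * α i)) = (fun i => u * b i - u ^ 2 * α i) :=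
      funext fun i => by ring
    rw [h2]
    exact hbP
end

section
/- In any abelian group G admitting a non-principal character χ: G → ℝ/ℤ, the set E = {g ∈ G : χ(g) ∈ [1/3, 2/3)} is syndetic but contains no triple of the form {u, y, y + u} with u, y ∈ G. -/
noncomputable section SyndeticAux

/-- canonical representative in `[0,1)` of an element of `ℝ/ℤ`. -/
def rep' (x : AddCircle (1 : ℝ)) : ℝ := (AddCircle.equivIco 1 0 x : ℝ)

lemma rep'_mem (x : AddCircle (1 : ℝ)) : rep' x ∈ Set.Ico (0 : ℝ) 1 := by
  simpa [rep'] using (AddCircle.equivIco 1 0 x).2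

lemma rep'_coe (x : AddCircle (1 : ℝ)) : ((rep' x : ℝ) : AddCircle (1 : ℝ)) = x :=
  (AddCircle.equivIco 1 0).symm_apply_apply x

lemma rep'_eq {x : AddCircle (1 : ℝ)} {r : ℝ} (hr : r ∈ Set.Ico (0 : ℝ) 1)
    (h : x = (r : AddCircle (1 : ℝ))) : rep' x = r := by
  have h2 : ((rep' x : ℝ) : AddCircle (1 : ℝ)) = (r : AddCircle (1 : ℝ)) := by
    rw [rep'_coe, h]
  have h0 : rep' x ∈ Set.Ico (0 : ℝ) (0 + 1) := by simpa using rep'_mem x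
  have h1 : r ∈ Set.Ico (0 : ℝ) (0 + 1) := by simpa using hr
  exact (AddCircle.coe_eq_coe_iff_of_mem_Ico h0 h1).mp h2

/-- if two reals have the same image in `ℝ/ℤ`, they differ by an integer. -/
lemma sub_int_of_coe_eq {r s : ℝ} (h : (r : AddCircle (1 : ℝ)) = (s : AddCircle (1 : ℝ))) :
    ∃ n : ℤ, r - s = n := by
  have : ((r - s : ℝ) : AddCircle (1 : ℝ)) = 0 := by
    rw [AddCircle.coe_sub, h, sub_self]
  obtain ⟨n, hn⟩ := (AddCircle.coe_eq_zero_iff 1).mp this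
  exact ⟨n, by simpa using hn.symm⟩

end SyndeticAux

/-- In any abelian group `G` admitting a non-principal character `χ : G → ℝ/ℤ`, the set
`E = {g : χ(g) ∈ [1/3, 2/3)}` is syndetic (finitely many translates of `E` cover `G`),
but `E` contains no triple of the form `{u, y, y + u}`. -/
theorem syndetic_no_schur_triple {G : Type*} [AddCommGroup G]
    (χ : G →+ AddCircle (1 : ℝ)) (hχ : χ ≠ 0) :
    (∃ S : Finset G, ∀ g : G, ∃ s ∈ S,
      s + g ∈ {g : G | ∃ r : ℝ, r ∈ Set.Ico (1/3 : ℝ) (2/3) ∧ χ g = (r : AddCircle (1 : ℝ))}) ∧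
    ∀ u y : G, ¬ (u ∈ {g : G | ∃ r : ℝ, r ∈ Set.Ico (1/3 : ℝ) (2/3) ∧ χ g = (r : AddCircle (1 : ℝ))} ∧
      y ∈ {g : G | ∃ r : ℝ, r ∈ Set.Ico (1/3 : ℝ) (2/3) ∧ χ g = (r : AddCircle (1 : ℝ))} ∧
      y + u ∈ {g : G | ∃ r : ℝ, r ∈ Set.Ico (1/3 : ℝ) (2/3) ∧ χ g = (r : AddCircle (1 : ℝ))}) := by
  have subIco : ∀ {r : ℝ}, r ∈ Set.Ico (1/3 : ℝ) (2/3) → r ∈ Set.Ico (0 : ℝ) 1 := by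
    rintro r ⟨h1, h2⟩; exact ⟨by linarith, by linarith⟩
  classical
  constructor
  · -- Syndeticity
    by_cases hsmall : ∃ g1 : G, rep' (χ g1) ∈ Set.Ioo (0 : ℝ) (1/3)
    · -- Case (a): there is an element with small positive representative.
      obtain ⟨g1, ha0, ha1⟩ := hsmall
      set a : ℝ := rep' (χ g1) with ha_def
      set N : ℕ := ⌈(1 : ℝ) / a⌉₊ with hN_def
      have hNa : (1 : ℝ) ≤ N * a := by
        have h1 : (1 : ℝ) / a ≤ N := Nat.le_ceil _
        calc (1 : ℝ) = (1 / a) * a := by field_simp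
        _ ≤ N * a := by nlinarith
      refine ⟨(Finset.range (N + 1)).image (fun n => n • g1), fun g => ?_⟩
      have hb := rep'_mem (χ g)
      set b : ℝ := rep' (χ g) with hb_def
      set c : ℝ := if b < 1/3 then b else b - 1 with hc_def
      have hc_lo : -2/3 ≤ c := by
        rw [hc_def]; split_ifs with h
        · linarith [hb.1]
        · push_neg at h; linarith
      have hc_hi : c < 1/3 := by
        rw [hc_def]; split_ifs with h
        · exact h
        · linarith [hb.2]
      have hc_coe : ((c : ℝ) : AddCircle (1 : ℝ)) = χ g := by
        rw [hc_def]; split_ifs with h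
        · exact rep'_coe (χ g)
        · have h2 : ((b - 1 + 1 : ℝ) : AddCircle (1 : ℝ)) = ((b - 1 : ℝ) : AddCircle (1 : ℝ)) :=
            AddCircle.coe_add_period 1 (b - 1)
          rw [← rep'_coe (χ g), ← hb_def, ← h2]; norm_num
      have hP : ∃ n : ℕ, (1:ℝ)/3 ≤ c + n * a := by
        refine ⟨N, ?_⟩; linarith
      set n : ℕ := Nat.find hP with hn_def
      have hn_spec : (1:ℝ)/3 ≤ c + n * a := Nat.find_spec hP
      have hn_le : n ≤ N := Nat.find_min' hP (by linarith)
      have hn_pos : 0 < n := by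
        rcases Nat.eq_zero_or_pos n with h | h
        · exfalso; rw [h] at hn_spec; push_cast at hn_spec; linarith
        · exact h
      have hn_lt : c + n * a < 2/3 := by
        have hmin := Nat.find_min hP (show n - 1 < n from Nat.sub_lt hn_pos one_pos)
        push_neg at hmin
        have : ((n - 1 : ℕ) : ℝ) = (n : ℝ) - 1 := by
          push_cast [Nat.cast_sub hn_pos]; ring
        rw [this] at hmin
        nlinarith
      refine ⟨n • g1, Finset.mem_image.mpr ⟨n, Finset.mem_range.mpr (Nat.lt_succ_of_le hn_le), rfl⟩,
        c + n * a, ⟨hn_spec, hn_lt⟩, ?_⟩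
      have : χ (n • g1 + g) = n • χ g1 + χ g := by
        rw [map_add, map_nsmul]
      rw [this, ← rep'_coe (χ g1), ← ha_def, ← hc_coe]
      rw [← AddCircle.coe_nsmul, ← AddCircle.coe_add, nsmul_eq_mul]
      ring_nf
    · -- Case (b): every nonzero value has representative in [1/3, 2/3].
      push_neg at hsmall
      have key : ∀ g : G, χ g = 0 ∨ rep' (χ g) ∈ Set.Icc (1/3 : ℝ) (2/3) := by
        intro g
        have hb := rep'_mem (χ g)
        obtain ⟨hb0, hb1⟩ := hb
        rcases eq_or_lt_of_le hb0 with h0 | h0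
        · left
          rw [← rep'_coe (χ g), ← h0]
          norm_num
        · right
          have h1 : ¬ rep' (χ g) ∈ Set.Ioo (0:ℝ) (1/3) := hsmall g
          simp only [Set.mem_Ioo, not_and, not_lt] at h1
          have hb13 : 1/3 ≤ rep' (χ g) := h1 h0
          have hb23 : rep' (χ g) ≤ 2/3 := by
            by_contra hcon
            push_neg at hcon
            have hneg : χ (-g) = ((1 - rep' (χ g) : ℝ) : AddCircle (1 : ℝ)) := by
              rw [map_neg]
              conv_lhs => rw [← rep'_coe (χ g)]
              rw [← AddCircle.coe_neg,
                show (1 - rep' (χ g) : ℝ) = -(rep' (χ g)) + 1 by ring,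
                AddCircle.coe_add_period 1]
            have hre : rep' (χ (-g)) = 1 - rep' (χ g) :=
              rep'_eq ⟨by linarith, by linarith⟩ hneg
            exact hsmall (-g) (by rw [hre]; exact ⟨by linarith, by linarith⟩)
          exact ⟨hb13, hb23⟩
      -- get g1 with representative in [1/3, 2/3)
      obtain ⟨g0, hg0⟩ : ∃ g0 : G, χ g0 ≠ 0 := by
        by_contra hcon; push_neg at hcon
        exact hχ (AddMonoidHom.ext fun g => hcon g)
      have hg0' := (key g0).resolve_left hg0
      have hg1 : ∃ g1 : G, rep' (χ g1) ∈ Set.Ico (1/3 : ℝ) (2/3) := by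
        rcases lt_or_eq_of_le hg0'.2 with h | h
        · exact ⟨g0, hg0'.1, h⟩
        · refine ⟨-g0, ?_⟩
          have hneg : χ (-g0) = ((1/3 : ℝ) : AddCircle (1 : ℝ)) := by
            rw [map_neg, ← rep'_coe (χ g0), h, ← AddCircle.coe_neg]
            rw [show (1/3 : ℝ) = -(2/3) + 1 by ring, AddCircle.coe_add_period 1]
          rw [rep'_eq (by norm_num) hneg]
          norm_num
      obtain ⟨g1, hg1⟩ := hg1
      by_cases hh : ∃ h : G, rep' (χ h) = 2/3
      · obtain ⟨h, hh⟩ := hh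
        refine ⟨{0, g1, h}, fun g => ?_⟩
        rcases key g with h0 | ⟨hlo, hhi⟩
        · refine ⟨g1, by simp, rep' (χ g1), hg1, ?_⟩
          rw [map_add, h0, add_zero, rep'_coe]
        · rcases lt_or_eq_of_le hhi with hlt | heq
          · refine ⟨0, by simp, rep' (χ g), ⟨hlo, hlt⟩, ?_⟩
            rw [zero_add, rep'_coe]
          · refine ⟨h, by simp, 1/3, by norm_num, ?_⟩
            have e1 : χ h = ((2/3 : ℝ) : AddCircle (1 : ℝ)) := by rw [← rep'_coe (χ h), hh]
            have e2 : χ g = ((2/3 : ℝ) : AddCircle (1 : ℝ)) := by rw [← rep'_coe (χ g), heq]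
            rw [map_add, e1, e2, ← AddCircle.coe_add]
            rw [show (2/3 + 2/3 : ℝ) = 1/3 + 1 by ring, AddCircle.coe_add_period 1]
      · refine ⟨{0, g1}, fun g => ?_⟩
        rcases key g with h0 | ⟨hlo, hhi⟩
        · refine ⟨g1, by simp, rep' (χ g1), hg1, ?_⟩
          rw [map_add, h0, add_zero, rep'_coe]
        · rcases lt_or_eq_of_le hhi with hlt | heq
          · refine ⟨0, by simp, rep' (χ g), ⟨hlo, hlt⟩, ?_⟩
            rw [zero_add, rep'_coe]
          · exact absurd ⟨g, heq⟩ hh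
  · -- No Schur triple
    rintro u y ⟨⟨ru, hru, hu⟩, ⟨ry, hry, hy⟩, ⟨rt, hrt, ht⟩⟩
    have hsum : ((rt : ℝ) : AddCircle (1 : ℝ)) = ((ry + ru : ℝ) : AddCircle (1 : ℝ)) := by
      rw [AddCircle.coe_add, ← hu, ← hy, ← ht, map_add]
    obtain ⟨n, hn⟩ := sub_int_of_coe_eq hsum
    have h1 : (n : ℝ) < 0 := by
      rw [← hn]
      have := hrt.2; have := hry.1; have := hru.1
      linarith
    have h2 : (-1 : ℝ) < n := by
      rw [← hn]
      have := hrt.1; have := hry.2; have := hru.2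
      linarith
    have hn1 : n < 0 := by exact_mod_cast h1
    have hn2 : (-1 : ℤ) < n := by exact_mod_cast h2
    omega
end
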